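/- arXiv:1107.5917 — 10 statements merged into one kernel-verified Lean document; each statement's English description precedes it below -/
import Mathlib

section
/- If Φ solves Φ''' = Φ^(−3) − 1 on [τ₀, τ*) with Φ > 0, and liminf as τ → τ*⁻ of Φ(τ) equals 0, then the limit of Φ(τ) as τ → τ*⁻ exists and equals 0. -/
open Filter Set

/-- Helper: monotonicity on `Ico a b` from pointwise `HasDerivAt` with nonneg derivative. -/
lemma mono_help' {g g' : ℝ → ℝ} {a b : ℝ}
    (hg : ∀ x ∈ Set.Ico a b, HasDerivAt g (g' x) x)
    (h0 : ∀ x ∈ Set.Ioo a b, 0 ≤ g' x) : MonotoneOn g (Set.Ico a b) := by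
  apply monotoneOn_of_hasDerivWithinAt_nonneg (convex_Ico a b)
  · exact fun x hx => (hg x hx).continuousAt.continuousWithinAt
  · intro x hx
    rw [interior_Ico] at hx
    exact (hg x (Set.Ioo_subset_Ico_self hx)).hasDerivWithinAt
  · intro x hx
    rw [interior_Ico] at hx
    exact h0 x hx

/-- Helper: if `g' ≥ C` on `Ioo a b` then `g τ ≥ g a - |C| * (b - a)` on `Ico a b`. -/
lemma bound_below' {g g' : ℝ → ℝ} {a b C : ℝ} (hab : a < b)
    (hg : ∀ x ∈ Set.Ico a b, HasDerivAt g (g' x) x)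
    (h0 : ∀ x ∈ Set.Ioo a b, C ≤ g' x) :
    ∀ τ ∈ Set.Ico a b, g a - |C| * (b - a) ≤ g τ := by
  have hmono : MonotoneOn (fun t => g t - C * t) (Set.Ico a b) := by
    apply mono_help' (g' := fun t => g' t - C)
    · intro x hx
      have h1 : HasDerivAt (fun t : ℝ => C * t) C x := by
        simpa using (hasDerivAt_id x).const_mul C
      exact (hg x hx).sub h1
    · intro x hx; have := h0 x hx; linarith
  intro τ hτ
  have := hmono ⟨le_refl a, hab⟩ hτ hτ.1
  simp only at this
  have h1 : -|C| ≤ C := neg_abs_le C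
  have h2 : 0 ≤ |C| := abs_nonneg C
  have h3 : a ≤ τ := hτ.1
  have h4 : τ < b := hτ.2
  nlinarith

/-- Helper: if `g' ≤ C` on `Ioo a b` then `g τ ≤ g a + |C| * (b - a)` on `Ico a b`. -/
lemma bound_above' {g g' : ℝ → ℝ} {a b C : ℝ} (hab : a < b)
    (hg : ∀ x ∈ Set.Ico a b, HasDerivAt g (g' x) x)
    (h0 : ∀ x ∈ Set.Ioo a b, g' x ≤ C) :
    ∀ τ ∈ Set.Ico a b, g τ ≤ g a + |C| * (b - a) := by
  have := bound_below' (g := fun t => -g t) (g' := fun t => -g' t) (C := -C) hab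
    (fun x hx => (hg x hx).neg) (fun x hx => by have := h0 x hx; show -C ≤ -g' x; linarith)
  intro τ hτ
  have h1 := this τ hτ
  simp only [abs_neg] at h1
  linarith

/-- If Φ solves Φ''' = Φ⁻³ − 1 on [τ₀, τ*) with Φ > 0 and
liminf_{τ→τ*⁻} Φ(τ) = 0, then Φ(τ) → 0 as τ → τ*⁻. -/
theorem stmt3 (τ₀ τs : ℝ) (h : τ₀ < τs) (Φ W Ψ : ℝ → ℝ)
    (hpos : ∀ τ ∈ Set.Ico τ₀ τs, 0 < Φ τ)
    (hd : ∀ τ ∈ Set.Ioo τ₀ τs, HasDerivAt Φ (W τ) τ ∧ HasDerivAt W (Ψ τ) τ ∧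
      HasDerivAt Ψ ((Φ τ)⁻¹ ^ 3 - 1) τ)
    (hinf : Filter.liminf Φ (nhdsWithin τs (Set.Iio τs)) = 0) :
    Filter.Tendsto Φ (nhdsWithin τs (Set.Iio τs)) (nhds 0) := by
  set a : ℝ := (τ₀ + τs) / 2 with ha
  have ha1 : τ₀ < a := by rw [ha]; linarith
  have ha2 : a < τs := by rw [ha]; linarith
  have hsub : Set.Ico a τs ⊆ Set.Ioo τ₀ τs := fun x hx => ⟨lt_of_lt_of_le ha1 hx.1, hx.2⟩
  -- Step 1: Ψ bounded below on [a, τs)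
  have step1 : ∀ τ ∈ Set.Ico a τs, Ψ a - |(-1:ℝ)| * (τs - a) ≤ Ψ τ := by
    apply bound_below' (g' := fun t => (Φ t)⁻¹ ^ 3 - 1) ha2
    · exact fun x hx => (hd x (hsub hx)).2.2
    · intro x hx
      have hΦ := hpos x ⟨le_of_lt (lt_trans ha1 hx.1), hx.2⟩
      have : 0 < (Φ x)⁻¹ ^ 3 := by positivity
      linarith
  set L : ℝ := Ψ a - |(-1:ℝ)| * (τs - a) with hL
  -- Step 2: W bounded below on [a, τs)
  have step2 : ∀ τ ∈ Set.Ico a τs, W a - |L| * (τs - a) ≤ W τ := by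
    apply bound_below' (g' := Ψ) ha2
    · exact fun x hx => (hd x (hsub hx)).2.1
    · exact fun x hx => step1 x (Set.Ioo_subset_Ico_self hx)
  set M : ℝ := W a - |L| * (τs - a) with hM
  -- Step 3: almost-monotonicity of Φ
  set K : ℝ := |M| with hK
  have hK0 : 0 ≤ K := abs_nonneg M
  have step3 : ∀ σ ∈ Set.Ico a τs, ∀ τ ∈ Set.Ico a τs, σ ≤ τ → Φ σ ≤ Φ τ + K * (τ - σ) := by
    have hmono : MonotoneOn (fun t => Φ t - M * t) (Set.Ico a τs) := by
      apply mono_help' (g' := fun t => W t - M)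
      · intro x hx
        have h1 : HasDerivAt (fun t : ℝ => M * t) M x := by
          simpa using (hasDerivAt_id x).const_mul M
        exact ((hd x (hsub hx)).1).sub h1
      · intro x hx
        have := step2 x (Set.Ioo_subset_Ico_self hx)
        linarith
    intro σ hσ τ hτ hστ
    have := hmono hσ hτ hστ
    simp only at this
    have h1 : -|M| ≤ M := neg_abs_le M
    rw [hK]
    nlinarith [abs_nonneg M]
  -- the filter is nontrivial
  have hne : (nhdsWithin τs (Set.Iio τs)).NeBot := nhdsWithin_Iio_self_neBot' ⟨τ₀, h⟩
  -- coboundedness of Φ from below order, via case split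
  have hcob : (nhdsWithin τs (Set.Iio τs)).IsCoboundedUnder (· ≥ ·) Φ := by
    by_cases hcase : ∀ᶠ σ in nhdsWithin τs (Set.Iio τs), 1 ≤ Φ σ
    · -- Φ eventually ≥ 1, so Ψ' ≤ 0 and Φ is bounded above near τs
      obtain ⟨c, hc, hcsub⟩ := (mem_nhdsLT_iff_exists_Ioo_subset' h).1 hcase
      set a' : ℝ := max c a with ha'
      have ha'1 : τ₀ < a' := lt_of_lt_of_le ha1 (le_max_right c a)
      have ha'2 : a' < τs := max_lt hc ha2
      have hsub' : Set.Ico a' τs ⊆ Set.Ioo τ₀ τs := fun x hx => ⟨lt_of_lt_of_le ha'1 hx.1, hx.2⟩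
      have hge1 : ∀ x ∈ Set.Ioo a' τs, 1 ≤ Φ x := fun x hx =>
        hcsub ⟨lt_of_le_of_lt (le_max_left c a) hx.1, hx.2⟩
      -- Ψ nonincreasing
      have bΨ : ∀ τ ∈ Set.Ico a' τs, Ψ τ ≤ Ψ a' + |(0:ℝ)| * (τs - a') := by
        apply bound_above' (g' := fun t => (Φ t)⁻¹ ^ 3 - 1) ha'2
        · exact fun x hx => (hd x (hsub' hx)).2.2
        · intro x hx
          have h1 := hge1 x hx
          have h2 : (0:ℝ) < Φ x := lt_of_lt_of_le one_pos h1
          have h3 : (Φ x)⁻¹ ≤ 1 := inv_le_one_of_one_le₀ h1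
          have h4 : (Φ x)⁻¹ ^ 3 ≤ 1 := pow_le_one₀ (by positivity) h3
          linarith
      have bW : ∀ τ ∈ Set.Ico a' τs, W τ ≤ W a' + |Ψ a' + |(0:ℝ)| * (τs - a')| * (τs - a') := by
        apply bound_above' (g' := Ψ) ha'2
        · exact fun x hx => (hd x (hsub' hx)).2.1
        · exact fun x hx => bΨ x (Set.Ioo_subset_Ico_self hx)
      set C₂ : ℝ := W a' + |Ψ a' + |(0:ℝ)| * (τs - a')| * (τs - a') with hC₂
      have bΦ : ∀ τ ∈ Set.Ico a' τs, Φ τ ≤ Φ a' + |C₂| * (τs - a') := by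
        apply bound_above' (g' := W) ha'2
        · exact fun x hx => (hd x (hsub' hx)).1
        · exact fun x hx => bW x (Set.Ioo_subset_Ico_self hx)
      refine ⟨Φ a' + |C₂| * (τs - a'), fun r hr => ?_⟩
      rw [Filter.eventually_map] at hr
      have hevB : ∀ᶠ σ in nhdsWithin τs (Set.Iio τs), Φ σ ≤ Φ a' + |C₂| * (τs - a') := by
        filter_upwards [Ioo_mem_nhdsLT ha'2] with σ hσ
        exact bΦ σ (Set.Ioo_subset_Ico_self hσ)
      obtain ⟨σ, h1, h2⟩ := (hr.and hevB).exists
      exact le_trans h1 h2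
    · -- frequently Φ < 1
      rw [Filter.not_eventually] at hcase
      refine ⟨1, fun r hr => ?_⟩
      rw [Filter.eventually_map] at hr
      obtain ⟨σ, h1, h2⟩ := (hcase.and_eventually hr).exists
      rw [not_le] at h1
      exact le_of_lt (lt_of_le_of_lt h2 h1)
  -- conclude
  rw [Metric.tendsto_nhds]
  intro ε hε
  have hfreq : ∃ᶠ τ in nhdsWithin τs (Set.Iio τs), Φ τ < ε / 2 :=
    Filter.frequently_lt_of_liminf_lt hcob (by rw [hinf]; linarith)
  set δ : ℝ := min (τs - a) (ε / (2 * (K + 1))) with hδdef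
  have hδpos : 0 < δ := lt_min (by linarith) (by positivity)
  have hmax : max (τs - δ) a < τs := max_lt (by linarith) ha2
  filter_upwards [Ioo_mem_nhdsLT hmax] with σ hσ
  have hσa : a ≤ σ := le_of_lt (lt_of_le_of_lt (le_max_right _ _) hσ.1)
  have hσδ : τs - δ < σ := lt_of_le_of_lt (le_max_left _ _) hσ.1
  have hσs : σ < τs := hσ.2
  obtain ⟨τ, hτsmall, hτmem⟩ :=
    (hfreq.and_eventually (Ioo_mem_nhdsLT hσs)).exists
  have hbound := step3 σ ⟨hσa, hσs⟩ τ ⟨le_of_lt (lt_of_le_of_lt hσa hτmem.1), hτmem.2⟩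
    (le_of_lt hτmem.1)
  have hτσ : τ - σ < δ := by have := hτmem.2; linarith
  have hKδ : K * δ ≤ ε / 2 := by
    have hδle : δ ≤ ε / (2 * (K + 1)) := min_le_right _ _
    calc K * δ ≤ K * (ε / (2 * (K + 1))) := mul_le_mul_of_nonneg_left hδle hK0
      _ ≤ ε / 2 := by
          rw [mul_comm, div_mul_eq_mul_div, div_le_div_iff₀ (by positivity) two_pos]
          nlinarith
  have hΦσ0 : 0 ≤ Φ σ := le_of_lt (hpos σ ⟨le_of_lt (lt_of_lt_of_le ha1 hσa), hσs⟩)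
  rw [Real.dist_eq, sub_zero, abs_of_nonneg hΦσ0]
  have : K * (τ - σ) ≤ K * δ := mul_le_mul_of_nonneg_left (le_of_lt hτσ) hK0
  linarith
end

section
/- Suppose Φ is a positive solution of Φ''' = Φ^(−3) − 1 on [0,∞) whose third derivative Ψ = Φ'' satisfies Ψ' ≥ −1 everywhere and ∫₀^∞ Ψ(s)² ds < ∞. Then Ψ(τ) → 0 as τ → ∞. -/
open MeasureTheory Set Filter

/-- If Φ is a positive solution of Φ''' = Φ⁻³ − 1 on [0,∞) with Ψ = Φ''
square-integrable on [0,∞), then Ψ(τ) → 0 as τ → ∞. -/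
theorem stmt5 (Φ W Ψ : ℝ → ℝ)
    (hpos : ∀ τ, 0 ≤ τ → 0 < Φ τ)
    (hd : ∀ τ, 0 ≤ τ → HasDerivAt Φ (W τ) τ ∧ HasDerivAt W (Ψ τ) τ ∧
      HasDerivAt Ψ ((Φ τ)⁻¹ ^ 3 - 1) τ)
    (hΨ' : ∀ τ, 0 ≤ τ → (-1 : ℝ) ≤ (Φ τ)⁻¹ ^ 3 - 1)
    (hint : MeasureTheory.IntegrableOn (fun s => (Ψ s) ^ 2) (Set.Ici 0)) :
    Filter.Tendsto Ψ Filter.atTop (nhds 0) := by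
  by_contra hcon
  rw [Metric.tendsto_atTop] at hcon
  push_neg at hcon
  obtain ⟨ε₀, hε₀, hseq⟩ := hcon
  set ε := min ε₀ 1 with hεdef
  have hεpos : 0 < ε := lt_min hε₀ one_pos
  have hε1 : ε ≤ 1 := min_le_right _ _
  -- monotonicity of τ ↦ Ψ τ + τ on [0, ∞)
  have hmono : MonotoneOn (fun τ => Ψ τ + τ) (Ici (0:ℝ)) := by
    apply monotoneOn_of_deriv_nonneg (convex_Ici 0)
    · intro x hx
      exact (((hd x hx).2.2.add (hasDerivAt_id x)).continuousAt).continuousWithinAt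
    · intro x hx
      rw [interior_Ici] at hx
      exact (((hd x hx.le).2.2.add (hasDerivAt_id x)).differentiableAt).differentiableWithinAt
    · intro x hx
      rw [interior_Ici] at hx
      have hda : HasDerivAt (fun τ => Ψ τ + τ) ((Φ x)⁻¹ ^ 3 - 1 + 1) x := by
        exact ((hd x hx.le).2.2.add (hasDerivAt_id' x))
      rw [hda.deriv]
      have := hΨ' x hx.le
      linarith
  have key : ∀ t s : ℝ, 0 ≤ t → t ≤ s → Ψ t + t ≤ Ψ s + s := by
    intro t s ht hts
    exact hmono ht (le_trans ht hts) hts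
  have hIoi : IntegrableOn (fun s => Ψ s ^ 2) (Ioi 0) := hint.mono_set Ioi_subset_Ici_self
  set T := ∫ x in Ioi (0:ℝ), Ψ x ^ 2 with hTdef
  have hT : Tendsto (fun N => ∫ x in (0:ℝ)..N, Ψ x ^ 2) atTop (nhds T) :=
    intervalIntegral_tendsto_integral_Ioi 0 hIoi tendsto_id
  have hbd : ∀ᶠ N in atTop, (∫ x in (0:ℝ)..N, Ψ x ^ 2) ≤ T - (ε/2)^2 * (ε/2) := by
    filter_upwards [eventually_ge_atTop (0:ℝ)] with N hN
    obtain ⟨τ, hτN, hτ⟩ := hseq (N + 1)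
    have habs : ε ≤ |Ψ τ| := by
      have : dist (Ψ τ) 0 = |Ψ τ| := by simp [Real.dist_eq]
      calc ε ≤ ε₀ := min_le_left _ _
        _ ≤ |Ψ τ| := by rw [← this]; exact hτ
    have hτ0 : (0:ℝ) ≤ τ := by linarith
    -- find an interval [a, a+ε/2] ⊆ (N, ∞) on which Ψ² ≥ (ε/2)²
    obtain ⟨a, haN, hIb⟩ :
        ∃ a : ℝ, N < a ∧ ∀ t ∈ Icc a (a + ε/2), (ε/2)^2 ≤ Ψ t ^ 2 := by
      rcases le_abs.mp habs with hca | hca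
      · refine ⟨τ, by linarith, fun t ht => ?_⟩
        have h1 := key τ t hτ0 ht.1
        have h2 : Ψ t ≥ ε/2 := by
          have := ht.2
          linarith
        nlinarith
      · refine ⟨τ - ε/2, by linarith, fun t ht => ?_⟩
        have ht0 : (0:ℝ) ≤ t := by
          have := ht.1
          linarith
        have hta : t ≤ τ := by
          have := ht.2
          linarith
        have h1 := key t τ ht0 hta
        have h2 : Ψ t ≤ -(ε/2) := by
          have := ht.1
          linarith
        nlinarith
    have hIccsub : Icc a (a + ε/2) ⊆ Ici (0:ℝ) := by
      intro x hx
      have := hx.1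
      simp only [mem_Ici]
      linarith
    have hIcc : IntegrableOn (fun s => Ψ s ^ 2) (Icc a (a + ε/2)) := hint.mono_set hIccsub
    have hIoc : IntegrableOn (fun s => Ψ s ^ 2) (Ioc (0:ℝ) N) :=
      hint.mono_set (fun x hx => le_of_lt hx.1)
    have hlow : (ε/2)^2 * (ε/2) ≤ ∫ x in Icc a (a + ε/2), Ψ x ^ 2 := by
      have hμ : volume (Icc a (a + ε/2)) ≠ ⊤ := by
        rw [Real.volume_Icc]; exact ENNReal.ofReal_ne_top
      have := setIntegral_ge_of_const_le_real measurableSet_Icc hμ hIb hIcc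
      rwa [Real.volume_real_Icc_of_le (by linarith : a ≤ a + ε/2), add_sub_cancel_left] at this
    have hdisj : Disjoint (Ioc (0:ℝ) N) (Icc a (a + ε/2)) := by
      rw [Set.disjoint_left]
      intro x hx1 hx2
      have := hx1.2
      have := hx2.1
      linarith
    have hunion : (∫ x in Ioc (0:ℝ) N ∪ Icc a (a + ε/2), Ψ x ^ 2)
        = (∫ x in Ioc (0:ℝ) N, Ψ x ^ 2) + ∫ x in Icc a (a + ε/2), Ψ x ^ 2 :=
      setIntegral_union hdisj measurableSet_Icc hIoc hIcc
    have hle : (∫ x in Ioc (0:ℝ) N ∪ Icc a (a + ε/2), Ψ x ^ 2) ≤ T := by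
      apply setIntegral_mono_set hIoi
      · exact ae_of_all _ fun x => sq_nonneg _
      · apply HasSubset.Subset.eventuallyLE
        intro x hx
        rcases hx with hx | hx
        · exact hx.1
        · have := hx.1
          simp only [mem_Ioi]
          linarith
    have hIocEq : (∫ x in (0:ℝ)..N, Ψ x ^ 2) = ∫ x in Ioc (0:ℝ) N, Ψ x ^ 2 :=
      intervalIntegral.integral_of_le hN
    rw [hIocEq]
    linarith [hunion ▸ hle]
  have hfin := le_of_tendsto hT hbd
  have hc : 0 < (ε/2)^2 * (ε/2) := by positivity
  linarith
end

section
/- Let Φ be a global positive solution of Φ''' = Φ^(−3) − 1 that does not converge to 1 as τ → ∞. Then limsup_{τ→∞} (1/(2Φ(τ)²) + Φ(τ)) = +∞. -/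
open Filter Set intervalIntegral

private lemma ftcX {f f' : ℝ → ℝ} (hf : ∀ x, HasDerivAt f (f' x) x)
    (hc : Continuous f') (a b : ℝ) : (∫ x in a..b, f' x) = f b - f a :=
  integral_eq_sub_of_hasDerivAt (fun x _ => hf x) (hc.intervalIntegrable a b)

private lemma incr_le {f f' : ℝ → ℝ} (hf : ∀ x, HasDerivAt f (f' x) x)
    (hc : Continuous f') {a b C : ℝ} (hab : a ≤ b)
    (hC : ∀ x ∈ Icc a b, |f' x| ≤ C) : |f b - f a| ≤ C * (b - a) := by
  rw [← ftcX hf hc a b]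
  have h := intervalIntegral.norm_integral_le_of_norm_le_const
    (f := f') (a := a) (b := b) (C := C) ?_
  · rw [Real.norm_eq_abs] at h
    rwa [abs_of_nonneg (sub_nonneg.mpr hab)] at h
  · intro x hx
    rw [Set.uIoc_of_le hab] at hx
    rw [Real.norm_eq_abs]
    exact hC x ⟨le_of_lt hx.1, hx.2⟩

private lemma incr_ge {f f' : ℝ → ℝ} (hf : ∀ x, HasDerivAt f (f' x) x)
    (hc : Continuous f') {a b c : ℝ} (hab : a ≤ b)
    (hC : ∀ x ∈ Icc a b, c ≤ f' x) : c * (b - a) ≤ f b - f a := by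
  rw [← ftcX hf hc a b]
  have h := intervalIntegral.integral_mono_on hab (_root_.intervalIntegrable_const (c := c) (μ := MeasureTheory.volume))
    (hc.intervalIntegrable a b) hC
  simpa [smul_eq_mul, mul_comm] using h

private lemma incr_ub {f f' : ℝ → ℝ} (hf : ∀ x, HasDerivAt f (f' x) x)
    (hc : Continuous f') {a b c : ℝ} (hab : a ≤ b)
    (hC : ∀ x ∈ Icc a b, f' x ≤ c) : f b - f a ≤ c * (b - a) := by
  rw [← ftcX hf hc a b]
  have h := intervalIntegral.integral_mono_on hab
    (hc.intervalIntegrable a b) (_root_.intervalIntegrable_const (c := c) (μ := MeasureTheory.volume)) hC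
  simpa [smul_eq_mul, mul_comm] using h

set_option maxHeartbeats 2000000 in
/-- If Φ is a global positive solution of Φ''' = Φ⁻³ − 1 that does not
converge to 1 as τ → ∞, then limsup_{τ→∞} (1/(2Φ²) + Φ) = +∞. -/
theorem stmt6 (Φ W Ψ : ℝ → ℝ)
    (hpos : ∀ τ : ℝ, 0 < Φ τ)
    (hd : ∀ τ : ℝ, HasDerivAt Φ (W τ) τ ∧ HasDerivAt W (Ψ τ) τ ∧
      HasDerivAt Ψ ((Φ τ)⁻¹ ^ 3 - 1) τ)
    (hnot : ¬ Filter.Tendsto Φ Filter.atTop (nhds 1)) :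
    ∀ M : ℝ, ∃ᶠ τ in Filter.atTop, M < 1 / (2 * (Φ τ) ^ 2) + Φ τ := by
  intro M
  by_contra hcon
  have hev : ∀ᶠ τ in atTop, 1 / (2 * Φ τ ^ 2) + Φ τ ≤ M := by
    have h := Filter.not_frequently.mp hcon
    filter_upwards [h] with τ hτ
    exact not_lt.mp hτ
  obtain ⟨T, hT⟩ := Filter.eventually_atTop.mp hev
  -- continuity facts
  have hΦc : Continuous Φ := by
    have : Differentiable ℝ Φ := fun τ => (hd τ).1.differentiableAt
    exact this.continuous
  have hWc : Continuous W := by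
    have : Differentiable ℝ W := fun τ => (hd τ).2.1.differentiableAt
    exact this.continuous
  have hΨc : Continuous Ψ := by
    have : Differentiable ℝ Ψ := fun τ => (hd τ).2.2.differentiableAt
    exact this.continuous
  have hFc : Continuous (fun s => (Φ s)⁻¹ ^ 3 - 1) :=
    ((hΦc.inv₀ fun s => (hpos s).ne').pow 3).sub continuous_const
  -- bounds on Φ
  set B : ℝ := max M 2 with hBdef
  have hB2 : (2:ℝ) ≤ B := le_max_right _ _
  have hB0 : (0:ℝ) < B := by linarith
  have hVB : ∀ τ, T ≤ τ → 1 / (2 * Φ τ ^ 2) + Φ τ ≤ B :=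
    fun τ hτ => le_trans (hT τ hτ) (le_max_left _ _)
  have hub : ∀ τ, T ≤ τ → Φ τ ≤ B := by
    intro τ hτ
    have h1 := hVB τ hτ
    have hp := hpos τ
    have h2 : 0 < 1 / (2 * Φ τ ^ 2) := by positivity
    linarith
  clear_value B
  set δ : ℝ := 1 / (2 * B ^ 2) with hδdef
  have hδ0 : (0:ℝ) < δ := by positivity
  have hlb : ∀ τ, T ≤ τ → δ ≤ Φ τ := by
    intro τ hτ
    have h1 := hVB τ hτ
    have hp := hpos τ
    have hu := hub τ hτ
    have h2 : 1 / (2 * Φ τ ^ 2) ≤ B := by nlinarith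
    have h3 : 1 ≤ B * (2 * Φ τ ^ 2) := by
      rw [div_le_iff₀ (by positivity)] at h2; linarith
    rw [hδdef, div_le_iff₀ (by positivity)]
    nlinarith
  clear_value δ
  -- the energy function
  set e : ℝ → ℝ := fun τ => Ψ τ * W τ + (1 / (2 * Φ τ ^ 2) + Φ τ) with hedef
  have heval : ∀ τ, e τ = Ψ τ * W τ + (1 / (2 * Φ τ ^ 2) + Φ τ) := fun τ => rfl
  have hed : ∀ τ, HasDerivAt e (Ψ τ ^ 2) τ := by
    intro τ
    have hne : Φ τ ≠ 0 := (hpos τ).ne'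
    have h1 : HasDerivAt (fun s => Ψ s * W s)
        (((Φ τ)⁻¹ ^ 3 - 1) * W τ + Ψ τ * Ψ τ) τ := (hd τ).2.2.mul (hd τ).2.1
    have h2 : HasDerivAt (fun s => 2 * Φ s ^ 2) (2 * ((2:ℕ) * Φ τ ^ 1 * W τ)) τ :=
      ((hd τ).1.pow 2).const_mul 2
    have h2ne : 2 * Φ τ ^ 2 ≠ 0 := by positivity
    have h3 := h2.inv h2ne
    have h3' : HasDerivAt (fun s => 1 / (2 * Φ s ^ 2))
        (-(2 * ((2:ℕ) * Φ τ ^ 1 * W τ)) / (2 * Φ τ ^ 2) ^ 2) τ := by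
      simp only [one_div]; exact h3
    have h4 := h1.add (h3'.add (hd τ).1)
    rw [hedef]
    refine h4.congr_deriv ?_
    field_simp
    ring
  have hec : Continuous fun τ => Ψ τ ^ 2 := hΨc.pow 2
  have emono : Monotone e := by
    intro a b hab
    have := incr_ge hed hec hab (fun x _ => sq_nonneg (Ψ x))
    linarith
  clear_value e
  by_cases hA : ∃ t₀, T ≤ t₀ ∧ B + 1 ≤ e t₀
  · -- Case A: energy escapes
    obtain ⟨t₀, ht₀T, ht₀⟩ := hA
    have hWΨ : ∀ τ, t₀ ≤ τ → 1 ≤ W τ * Ψ τ := by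
      intro τ hτ
      have h1 : B + 1 ≤ e τ := le_trans ht₀ (emono hτ)
      have h2 := hVB τ (le_trans ht₀T hτ)
      rw [heval τ] at h1
      nlinarith [mul_comm (W τ) (Ψ τ)]
    have hgd : ∀ τ, HasDerivAt (fun s => W s ^ 2) ((2:ℕ) * W τ ^ 1 * Ψ τ) τ :=
      fun τ => (hd τ).2.1.pow 2
    have hgc : Continuous fun τ => ((2:ℕ):ℝ) * W τ ^ 1 * Ψ τ :=
      (continuous_const.mul (hWc.pow 1)).mul hΨc
    set t₁ : ℝ := t₀ + 2 * B ^ 2 with ht₁def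
    have ht₁t₀ : t₀ ≤ t₁ := by rw [ht₁def]; nlinarith
    have ht₁T : T ≤ t₁ := le_trans ht₀T ht₁t₀
    clear_value t₁
    have hgsq : ∀ s, s ∈ Set.Icc t₁ (t₁ + 1) → 4 * B ^ 2 ≤ W s ^ 2 := by
      intro s hs
      have hs0 : t₀ + 2 * B ^ 2 ≤ s := le_trans (le_of_eq ht₁def.symm) hs.1
      have hst₀ : t₀ ≤ s := by nlinarith
      have h1 : 2 * (s - t₀) ≤ W s ^ 2 - W t₀ ^ 2 := by
        refine incr_ge hgd hgc hst₀ (fun x hx => ?_)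
        have := hWΨ x hx.1
        push_cast
        nlinarith
      nlinarith [sq_nonneg (W t₀)]
    have hWne : ∀ s, t₀ ≤ s → W s ≠ 0 := by
      intro s hs h0
      have := hWΨ s hs
      rw [h0] at this; norm_num at this
    have hIVT : ∀ s, s ∈ Set.Icc t₁ (t₁ + 1) → ¬ (W t₁ < 0 ∧ 0 < W s) ∧ ¬ (W s < 0 ∧ 0 < W t₁) := by
      intro s hs
      constructor <;> rintro ⟨ha, hb⟩ <;>
      · have hsub : Set.uIcc (W t₁) (W s) ⊆ W '' Set.uIcc t₁ s :=
          intermediate_value_uIcc hWc.continuousOn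
        have h0 : (0:ℝ) ∈ Set.uIcc (W t₁) (W s) := by
          rw [Set.mem_uIcc]
          first
          | exact Or.inl ⟨le_of_lt ha, le_of_lt hb⟩
          | exact Or.inr ⟨le_of_lt ha, le_of_lt hb⟩
        obtain ⟨x, hx, hx0⟩ := hsub h0
        rw [Set.uIcc_of_le hs.1] at hx
        exact hWne x (le_trans ht₁t₀ hx.1) hx0
    rcases lt_or_gt_of_ne (hWne t₁ ht₁t₀) with hneg | hposW
    · have hsgn : ∀ s, s ∈ Set.Icc t₁ (t₁ + 1) → W s ≤ -(2 * B) := by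
        intro s hs
        have hWs := hgsq s hs
        have hWsneg : W s < 0 := by
          rcases lt_trichotomy (W s) 0 with h | h | h
          · exact h
          · exact absurd h (hWne s (le_trans ht₁t₀ hs.1))
          · exact absurd ⟨hneg, h⟩ (hIVT s hs).1
        nlinarith
      have hdec := incr_ub (fun τ => (hd τ).1) hWc (by linarith : t₁ ≤ t₁ + 1) hsgn
      rw [show t₁ + 1 - t₁ = (1:ℝ) by ring, mul_one] at hdec
      have h2 := hub t₁ ht₁T
      have h3 := hpos (t₁ + 1)
      linarith
    · have hsgn : ∀ s, s ∈ Set.Icc t₁ (t₁ + 1) → 2 * B ≤ W s := by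
        intro s hs
        have hWs := hgsq s hs
        have hWspos : 0 < W s := by
          rcases lt_trichotomy (W s) 0 with h | h | h
          · exact absurd ⟨h, hposW⟩ (hIVT s hs).2
          · exact absurd h (hWne s (le_trans ht₁t₀ hs.1))
          · exact h
        nlinarith
      have hinc := incr_ge (fun τ => (hd τ).1) hWc (by linarith : t₁ ≤ t₁ + 1) hsgn
      rw [show t₁ + 1 - t₁ = (1:ℝ) by ring, mul_one] at hinc
      have h2 := hub (t₁ + 1) (by linarith)
      have h3 := hpos t₁
      linarith
  · -- Case B: energy bounded, converges
    push_neg at hA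
    have hbdd : BddAbove (Set.range e) := by
      refine ⟨max (e T) (B + 1), ?_⟩
      rintro _ ⟨t, rfl⟩
      rcases le_total t T with h | h
      · exact le_trans (emono h) (le_max_left _ _)
      · exact le_trans (le_of_lt (hA t h)) (le_max_right _ _)
    set L : ℝ := ⨆ t, e t with hLdef
    have hL : Filter.Tendsto e Filter.atTop (nhds L) := tendsto_atTop_ciSup emono hbdd
    have heL : ∀ t, e t ≤ L := fun t => le_ciSup hbdd t
    clear_value L
    -- Step B1 : Ψ → 0
    have hΨ0 : Filter.Tendsto Ψ Filter.atTop (nhds 0) := by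
      rw [Metric.tendsto_atTop]
      intro ε hε
      obtain ⟨K₀, hK₀, hK₀def⟩ : ∃ K₀ : ℝ, 0 < K₀ ∧ K₀ = δ⁻¹ ^ 3 + 1 :=
        ⟨_, by positivity, rfl⟩
      have hΨ'bd : ∀ x, T ≤ x → |(Φ x)⁻¹ ^ 3 - 1| ≤ K₀ := by
        intro x hx
        have h1 : (Φ x)⁻¹ ≤ δ⁻¹ := by
          rw [inv_le_inv₀ (hpos x) hδ0]; exact hlb x hx
        have h2 : (0:ℝ) < (Φ x)⁻¹ := inv_pos.mpr (hpos x)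
        have h3 : (Φ x)⁻¹ ^ 3 ≤ δ⁻¹ ^ 3 := pow_le_pow_left₀ (le_of_lt h2) h1 3
        have h4 : (0:ℝ) < (Φ x)⁻¹ ^ 3 := by positivity
        rw [hK₀def, abs_le]
        constructor <;> nlinarith
      obtain ⟨h, hh, hhdef⟩ : ∃ h : ℝ, 0 < h ∧ h = ε / (2 * K₀) :=
        ⟨_, by positivity, rfl⟩
      obtain ⟨c, hc, hcdef⟩ : ∃ c : ℝ, 0 < c ∧ c = (ε / 2) ^ 2 * h :=
        ⟨_, by positivity, rfl⟩
      obtain ⟨T₂, hT₂⟩ := (Metric.tendsto_atTop.mp hL) (c / 2) (by positivity)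
      refine ⟨max T T₂, fun t ht => ?_⟩
      rw [Real.dist_eq, sub_zero]
      by_contra hcon2
      push_neg at hcon2
      have htT : T ≤ t := le_trans (le_max_left _ _) ht
      have htT₂ : T₂ ≤ t := le_trans (le_max_right _ _) ht
      have hΨbig : ∀ s, s ∈ Set.Icc t (t + h) → (ε / 2) ^ 2 ≤ Ψ s ^ 2 := by
        intro s hs
        have h1 := incr_le (fun τ => (hd τ).2.2) hFc hs.1
          (fun x hx => hΨ'bd x (le_trans htT hx.1))
        have h2 : |Ψ s - Ψ t| ≤ K₀ * h := by
          refine le_trans h1 ?_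
          have hs2 := hs.2
          nlinarith
        have h3 : K₀ * h = ε / 2 := by
          rw [hhdef]; field_simp
        rw [h3] at h2
        have h4 : ε / 2 ≤ |Ψ s| := by
          have h5 := abs_sub_abs_le_abs_sub (Ψ t) (Ψ s)
          rw [abs_sub_comm] at h5
          linarith
        calc (ε / 2) ^ 2 ≤ |Ψ s| ^ 2 := by nlinarith [abs_nonneg (Ψ s)]
        _ = Ψ s ^ 2 := sq_abs _
      have h5 := incr_ge hed hec (by linarith : t ≤ t + h) hΨbig
      rw [show t + h - t = h by ring] at h5
      have h7 := heL (t + h)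
      have h8 := hT₂ t htT₂
      rw [Real.dist_eq] at h8
      have h9 : L - c / 2 < e t := by
        rcases abs_lt.mp h8 with ⟨hl, hr⟩
        linarith
      rw [hcdef] at h9 hc
      linarith
    -- Step B2 : W → 0
    have hW0 : Filter.Tendsto W Filter.atTop (nhds 0) := by
      rw [Metric.tendsto_atTop]
      intro ε hε
      obtain ⟨h, hh, hhdef⟩ : ∃ h : ℝ, 0 < h ∧ h = 4 * B / ε :=
        ⟨_, by positivity, rfl⟩
      obtain ⟨T₃, hT₃⟩ := (Metric.tendsto_atTop.mp hΨ0) (ε / (2 * h)) (by positivity)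
      refine ⟨max T T₃, fun t ht => ?_⟩
      rw [Real.dist_eq, sub_zero]
      by_contra hcon2
      push_neg at hcon2
      have htT : T ≤ t := le_trans (le_max_left _ _) ht
      have htT₃ : T₃ ≤ t := le_trans (le_max_right _ _) ht
      have hWvar : ∀ s, s ∈ Set.Icc t (t + h) → |W s - W t| ≤ ε / 2 := by
        intro s hs
        have hbnd : ∀ x ∈ Set.Icc t s, |Ψ x| ≤ ε / (2 * h) := by
          intro x hx
          have := hT₃ x (le_trans htT₃ hx.1)
          rw [Real.dist_eq, sub_zero] at this
          exact le_of_lt this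
        have h1 := incr_le (fun τ => (hd τ).2.1) hΨc hs.1 hbnd
        refine le_trans h1 ?_
        have hs2 := hs.2
        have hq : (0:ℝ) < ε / (2 * h) := by positivity
        have h3 : ε / (2 * h) * h = ε / 2 := by field_simp
        nlinarith
      have hεh : ε / 2 * h = 2 * B := by rw [hhdef]; field_simp; ring
      rcases le_or_gt 0 (W t) with h0 | h0
      · have hWt : ε ≤ W t := by rwa [abs_of_nonneg h0] at hcon2
        have hsgn : ∀ s, s ∈ Set.Icc t (t + h) → ε / 2 ≤ W s := by
          intro s hs
          rcases abs_le.mp (hWvar s hs) with ⟨hl, hr⟩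
          linarith
        have hinc := incr_ge (fun τ => (hd τ).1) hWc (by linarith : t ≤ t + h) hsgn
        rw [show t + h - t = h by ring, hεh] at hinc
        have h2 := hub (t + h) (by linarith)
        have h3 := hpos t
        linarith
      · have hWt : W t ≤ -ε := by
          rw [abs_of_neg h0] at hcon2; linarith
        have hsgn : ∀ s, s ∈ Set.Icc t (t + h) → W s ≤ -(ε / 2) := by
          intro s hs
          rcases abs_le.mp (hWvar s hs) with ⟨hl, hr⟩
          linarith
        have hdec := incr_ub (fun τ => (hd τ).1) hWc (by linarith : t ≤ t + h) hsgn
        rw [show t + h - t = h by ring] at hdec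
        have hεh' : -(ε / 2) * h = -(2 * B) := by rw [← hεh]; ring
        rw [hεh'] at hdec
        have h2 := hub t htT
        have h3 := hpos (t + h)
        linarith
    -- Step B3 : Φ → 1
    have hΦ1 : Filter.Tendsto Φ Filter.atTop (nhds 1) := by
      rw [Metric.tendsto_atTop]
      intro ε hε
      obtain ⟨K₁, hK₁, hK₁def⟩ : ∃ K₁ : ℝ, 0 < K₁ ∧ K₁ = 3 * B ^ 2 / δ ^ 6 :=
        ⟨_, by positivity, rfl⟩
      obtain ⟨D, hD, hDdef⟩ : ∃ D : ℝ, 0 < D ∧ D = (K₁ + 2) * B ^ 3 :=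
        ⟨_, by positivity, rfl⟩
      obtain ⟨η, hη, hηdef⟩ : ∃ η : ℝ, 0 < η ∧ η = ε / (D + 1) :=
        ⟨_, by positivity, rfl⟩
      obtain ⟨T₄, hT₄⟩ := (Metric.tendsto_atTop.mp hΨ0) η hη
      obtain ⟨T₅, hT₅⟩ := (Metric.tendsto_atTop.mp hW0) η hη
      refine ⟨max T (max T₄ T₅), fun t ht => ?_⟩
      have htT : T ≤ t := le_trans (le_max_left _ _) ht
      have htT₄ : T₄ ≤ t := le_trans (le_trans (le_max_left _ _) (le_max_right _ _)) ht
      have htT₅ : T₅ ≤ t := le_trans (le_trans (le_max_right _ _) (le_max_right _ _)) ht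
      have hftc : (∫ s in t..(t+1), ((Φ s)⁻¹ ^ 3 - 1)) = Ψ (t+1) - Ψ t :=
        ftcX (fun τ => (hd τ).2.2) hFc t (t+1)
      have hptw : ∀ s ∈ Set.uIoc t (t+1),
          ‖((Φ s)⁻¹ ^ 3 - 1) - ((Φ t)⁻¹ ^ 3 - 1)‖ ≤ K₁ * η := by
        intro s hs
        rw [Set.uIoc_of_le (by linarith)] at hs
        have hst : t ≤ s := le_of_lt hs.1
        have hs1 : s ≤ t + 1 := hs.2
        have hΦvar : |Φ s - Φ t| ≤ η := by
          have hbnd : ∀ x ∈ Set.Icc t s, |W x| ≤ η := by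
            intro x hx
            have := hT₅ x (le_trans htT₅ hx.1)
            rw [Real.dist_eq, sub_zero] at this
            exact le_of_lt this
          have h1 := incr_le (fun τ => (hd τ).1) hWc hst hbnd
          refine le_trans h1 ?_
          nlinarith
        have hδs : δ ≤ Φ s := hlb s (le_trans htT hst)
        have hδt : δ ≤ Φ t := hlb t htT
        have hBs : Φ s ≤ B := hub s (le_trans htT hst)
        have hBt : Φ t ≤ B := hub t htT
        have hps := hpos s
        have hpt := hpos t
        rw [Real.norm_eq_abs]
        have key : (Φ s)⁻¹ ^ 3 - (Φ t)⁻¹ ^ 3 = (Φ t ^ 3 - Φ s ^ 3) / (Φ s ^ 3 * Φ t ^ 3) := by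
          field_simp
        have h2 : |(Φ s)⁻¹ ^ 3 - 1 - ((Φ t)⁻¹ ^ 3 - 1)|
            = |Φ t ^ 3 - Φ s ^ 3| / (Φ s ^ 3 * Φ t ^ 3) := by
          rw [show (Φ s)⁻¹ ^ 3 - 1 - ((Φ t)⁻¹ ^ 3 - 1) = (Φ s)⁻¹ ^ 3 - (Φ t)⁻¹ ^ 3 by ring,
            key, abs_div, abs_of_pos (by positivity : (0:ℝ) < Φ s ^ 3 * Φ t ^ 3)]
        rw [h2]
        have h3 : |Φ t ^ 3 - Φ s ^ 3| ≤ 3 * B ^ 2 * |Φ s - Φ t| := by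
          rw [show Φ t ^ 3 - Φ s ^ 3 = (Φ t - Φ s) * (Φ t ^ 2 + Φ t * Φ s + Φ s ^ 2) by ring,
            abs_mul, abs_sub_comm]
          have h4 : |Φ t ^ 2 + Φ t * Φ s + Φ s ^ 2| ≤ 3 * B ^ 2 := by
            rw [abs_of_pos (by positivity)]
            nlinarith
          nlinarith [abs_nonneg (Φ s - Φ t), abs_nonneg (Φ t ^ 2 + Φ t * Φ s + Φ s ^ 2)]
        have h5 : δ ^ 6 ≤ Φ s ^ 3 * Φ t ^ 3 := by
          have hs3 : δ ^ 3 ≤ Φ s ^ 3 := pow_le_pow_left₀ hδ0.le hδs 3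
          have ht3 : δ ^ 3 ≤ Φ t ^ 3 := pow_le_pow_left₀ hδ0.le hδt 3
          have := mul_le_mul hs3 ht3 (by positivity) (by positivity : (0:ℝ) ≤ Φ s ^ 3)
          nlinarith
        rw [div_le_iff₀ (by positivity)]
        have h7 : K₁ * δ ^ 6 = 3 * B ^ 2 := by
          rw [hK₁def]; field_simp
        calc |Φ t ^ 3 - Φ s ^ 3| ≤ 3 * B ^ 2 * |Φ s - Φ t| := h3
        _ ≤ 3 * B ^ 2 * η := by nlinarith [abs_nonneg (Φ s - Φ t)]
        _ = K₁ * δ ^ 6 * η := by rw [h7]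
        _ ≤ K₁ * η * (Φ s ^ 3 * Φ t ^ 3) := by nlinarith [mul_le_mul_of_nonneg_left h5 (by positivity : (0:ℝ) ≤ K₁ * η)]
      have hint := intervalIntegral.norm_integral_le_of_norm_le_const hptw
      have hsplit : (∫ s in t..(t+1), (((Φ s)⁻¹ ^ 3 - 1) - ((Φ t)⁻¹ ^ 3 - 1)))
          = (Ψ (t+1) - Ψ t) - ((Φ t)⁻¹ ^ 3 - 1) := by
        rw [intervalIntegral.integral_sub (hFc.intervalIntegrable t (t+1))
          (intervalIntegrable_const (μ := MeasureTheory.volume)), hftc,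
          intervalIntegral.integral_const]
        simp
      have hΨt : |Ψ t| < η := by
        have := hT₄ t htT₄; rwa [Real.dist_eq, sub_zero] at this
      have hΨt1 : |Ψ (t+1)| < η := by
        have := hT₄ (t+1) (by linarith); rwa [Real.dist_eq, sub_zero] at this
      have hcube : |(Φ t)⁻¹ ^ 3 - 1| ≤ (K₁ + 2) * η := by
        rw [hsplit, Real.norm_eq_abs, show |t + 1 - t| = (1:ℝ) by norm_num, mul_one] at hint
        have h10 : |Ψ (t+1) - Ψ t| ≤ 2 * η := by
          calc |Ψ (t+1) - Ψ t| ≤ |Ψ (t+1)| + |Ψ t| := abs_sub _ _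
          _ ≤ 2 * η := by linarith
        have h11 := abs_sub_abs_le_abs_sub ((Φ t)⁻¹ ^ 3 - 1) (Ψ (t+1) - Ψ t)
        rw [abs_sub_comm] at hint
        nlinarith [hint]
      rw [Real.dist_eq]
      have ha := hpos t
      have hBt : Φ t ≤ B := hub t htT
      have h12 : |Φ t - 1| ≤ |1 - Φ t ^ 3| := by
        rw [show (1:ℝ) - Φ t ^ 3 = -((Φ t - 1) * (Φ t ^ 2 + Φ t + 1)) by ring,
          abs_neg, abs_mul, abs_of_pos (by positivity : (0:ℝ) < Φ t ^ 2 + Φ t + 1)]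
        nlinarith [mul_nonneg (abs_nonneg (Φ t - 1)) (by positivity : (0:ℝ) ≤ Φ t ^ 2 + Φ t)]
      have h14 : |1 - Φ t ^ 3| = Φ t ^ 3 * |(Φ t)⁻¹ ^ 3 - 1| := by
        rw [← abs_of_pos (by positivity : (0:ℝ) < Φ t ^ 3), ← abs_mul]
        congr 1
        have hx : Φ t ^ 3 * (Φ t)⁻¹ ^ 3 = 1 := by
          rw [← mul_pow, mul_inv_cancel₀ (hpos t).ne', one_pow]
        rw [mul_sub, mul_one, hx, abs_of_pos (by positivity : (0:ℝ) < Φ t ^ 3)]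
      have h15 : Φ t ^ 3 * |(Φ t)⁻¹ ^ 3 - 1| ≤ B ^ 3 * ((K₁ + 2) * η) := by
        have hb3 : Φ t ^ 3 ≤ B ^ 3 := pow_le_pow_left₀ ha.le hBt 3
        calc Φ t ^ 3 * |(Φ t)⁻¹ ^ 3 - 1| ≤ B ^ 3 * |(Φ t)⁻¹ ^ 3 - 1| :=
          mul_le_mul_of_nonneg_right hb3 (abs_nonneg _)
        _ ≤ B ^ 3 * ((K₁ + 2) * η) := mul_le_mul_of_nonneg_left hcube (by positivity)
      have h16 : B ^ 3 * ((K₁ + 2) * η) = D * η := by rw [hDdef]; ring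
      have h17 : D * η < ε := by
        have hde : η * (D + 1) = ε := by rw [hηdef]; field_simp
        nlinarith
      rw [h14] at h12
      linarith
    exact hnot hΦ1
end

section
/- Let Φ be a global positive solution of Φ''' = Φ^(−3) − 1 that does not converge to 1 as τ → ∞. Then limsup_{τ→∞} Φ(τ) = +∞ and liminf_{τ→∞} Φ(τ) = 0. -/
open Filter Set

lemma growth_ge {f f' : ℝ → ℝ} (hf : ∀ t, HasDerivAt f (f' t) t) {a b c : ℝ} (hab : a ≤ b)
    (hc : ∀ t ∈ Set.Ioo a b, c ≤ f' t) : f a + c * (b - a) ≤ f b := by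
  have hfc : Continuous f := continuous_iff_continuousAt.2 (fun t => (hf t).continuousAt)
  have hg : ∀ t, HasDerivAt (fun t => f t - c * t) (f' t - c) t := fun t => by
    have := (hf t).sub ((hasDerivAt_id' t).const_mul c); rw [mul_one] at this; exact this
  have h : MonotoneOn (fun t => f t - c * t) (Set.Icc a b) := by
    apply monotoneOn_of_deriv_nonneg (convex_Icc a b)
    · exact (hfc.sub (continuous_const.mul continuous_id)).continuousOn
    · exact fun t ht => (hg t).differentiableAt.differentiableWithinAt
    · intro t ht
      rw [interior_Icc] at ht
      rw [(hg t).deriv]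
      have := hc t ht; linarith
  have := h (Set.left_mem_Icc.2 hab) (Set.right_mem_Icc.2 hab) hab
  simp only at this; linarith

lemma growth_le {f f' : ℝ → ℝ} (hf : ∀ t, HasDerivAt f (f' t) t) {a b c : ℝ} (hab : a ≤ b)
    (hc : ∀ t ∈ Set.Ioo a b, f' t ≤ c) : f b ≤ f a + c * (b - a) := by
  have := growth_ge (f := fun t => -f t) (f' := fun t => -f' t)
    (fun t => (hf t).neg) (c := -c) hab (fun t ht => by have := hc t ht; simp; linarith)
  simp at this; linarith

/-- if derivative ≤ c < 0 on a tail, f is eventually below any A -/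
lemma tail_le {f f' : ℝ → ℝ} (hf : ∀ t, HasDerivAt f (f' t) t) {T c : ℝ} (hc : c < 0)
    (h : ∀ τ ≥ T, f' τ ≤ c) (A : ℝ) : ∃ T' ≥ T, ∀ τ ≥ T', f τ ≤ A := by
  refine ⟨max T ((f T - A) / (-c) + T), le_max_left _ _, fun τ hτ => ?_⟩
  have hT : T ≤ τ := le_trans (le_max_left _ _) hτ
  have h2 : f τ ≤ f T + c * (τ - T) :=
    growth_le hf hT (fun t ht => h t (le_of_lt ht.1))
  have h3 : (f T - A) / (-c) + T ≤ τ := le_trans (le_max_right _ _) hτ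
  have h4 : (f T - A) / (-c) ≤ τ - T := by linarith
  have h5 : (f T - A) ≤ (τ - T) * (-c) := (div_le_iff₀ (by linarith)).1 h4
  nlinarith

lemma tail_ge {f f' : ℝ → ℝ} (hf : ∀ t, HasDerivAt f (f' t) t) {T c : ℝ} (hc : 0 < c)
    (h : ∀ τ ≥ T, c ≤ f' τ) (A : ℝ) : ∃ T' ≥ T, ∀ τ ≥ T', A ≤ f τ := by
  have := tail_le (f := fun t => -f t) (f' := fun t => -f' t) (fun t => (hf t).neg)
    (c := -c) (by linarith) (fun τ hτ => by simp; exact h τ hτ) (-A)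
  obtain ⟨T', hT', h2⟩ := this
  exact ⟨T', hT', fun τ hτ => by have := h2 τ hτ; simp at this; linarith⟩


lemma deriv_neg_after {f : ℝ → ℝ} {f' a : ℝ} (hf : HasDerivAt f f' a) (h0 : f a = 0)
    (hneg : f' < 0) : ∃ s₀ > 0, ∀ s, 0 < s → s ≤ s₀ → f (a + s) < 0 := by
  rw [hasDerivAt_iff_tendsto_slope] at hf
  have hev : ∀ᶠ t in nhdsWithin a {a}ᶜ, slope f a t < f' / 2 :=
    hf.eventually (eventually_lt_nhds (by linarith))
  rw [eventually_nhdsWithin_iff, Metric.eventually_nhds_iff] at hev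
  obtain ⟨ε, hε, hball⟩ := hev
  refine ⟨ε/2, by linarith, fun s hs1 hs2 => ?_⟩
  have h1 : dist (a + s) a < ε := by
    rw [Real.dist_eq, abs_of_pos (by linarith : (0:ℝ) < a + s - a)]
    linarith
  have h2 : a + s ∈ ({a}ᶜ : Set ℝ) := by
    simp only [mem_compl_iff, mem_singleton_iff]
    intro h
    linarith [congrArg (fun x => x - a) h]
  have h3 := hball h1 h2
  rw [slope_def_field, h0] at h3
  have h4 : (f (a + s) - 0) / (a + s - a) = f (a + s) / s := by ring_nf
  rw [h4] at h3
  have h5 : f (a + s) < f' / 2 * s := (div_lt_iff₀ hs1).1 h3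
  nlinarith

lemma deriv_neg_before {f : ℝ → ℝ} {f' a : ℝ} (hf : HasDerivAt f f' a) (h0 : f a = 0)
    (hneg : f' < 0) : ∃ s₀ > 0, ∀ s, 0 < s → s ≤ s₀ → 0 < f (a - s) := by
  rw [hasDerivAt_iff_tendsto_slope] at hf
  have hev : ∀ᶠ t in nhdsWithin a {a}ᶜ, slope f a t < f' / 2 :=
    hf.eventually (eventually_lt_nhds (by linarith))
  rw [eventually_nhdsWithin_iff, Metric.eventually_nhds_iff] at hev
  obtain ⟨ε, hε, hball⟩ := hev
  refine ⟨ε/2, by linarith, fun s hs1 hs2 => ?_⟩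
  have h1 : dist (a - s) a < ε := by
    rw [Real.dist_eq, abs_of_neg (by linarith : a - s - a < 0)]
    linarith
  have h2 : a - s ∈ ({a}ᶜ : Set ℝ) := by
    simp only [mem_compl_iff, mem_singleton_iff]
    intro h
    have : s = 0 := by linarith [congrArg (· - a) h]
    linarith
  have h3 := hball h1 h2
  rw [slope_def_field, h0] at h3
  have h4 : (f (a - s) - 0) / (a - s - a) = f (a - s) / (-s) := by ring_nf
  rw [h4] at h3
  have h5 : f (a - s) / (-s) < f' / 2 := h3
  have h6 : -(f (a - s)) / s < f' / 2 := by
    rw [neg_div]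
    rw [div_neg] at h5
    linarith [h5]
  have h7 : -(f (a - s)) < f' / 2 * s := (div_lt_iff₀ hs1).1 h6
  nlinarith

lemma inv_cube_lb {x B : ℝ} (hx : 0 < x) (hB : 0 < B) (h : x^3 ≤ B) : 1/B ≤ x⁻¹^3 := by
  rw [inv_pow]
  have hx3 : (0:ℝ) < x^3 := by positivity
  calc 1/B ≤ 1/x^3 := one_div_le_one_div_of_le hx3 h
  _ = (x^3)⁻¹ := one_div _

lemma inv_cube_ub {x B : ℝ} (hB : 0 < B) (h : B ≤ x^3) : x⁻¹^3 ≤ 1/B := by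
  rw [inv_pow]
  have : (x^3)⁻¹ ≤ B⁻¹ := inv_anti₀ hB h
  rw [one_div]
  exact this


noncomputable def Hfun (Φ W Ψ : ℝ → ℝ) : ℝ → ℝ := fun τ => W τ * Ψ τ + Φ τ + (2 * (Φ τ)^2)⁻¹


section Main
set_option linter.unusedSectionVars false

variable {Φ W Ψ : ℝ → ℝ} (hpos : ∀ τ : ℝ, 0 < Φ τ)
  (hΦ : ∀ τ, HasDerivAt Φ (W τ) τ) (hW : ∀ τ, HasDerivAt W (Ψ τ) τ)
  (hΨ : ∀ τ, HasDerivAt Ψ ((Φ τ)⁻¹ ^ 3 - 1) τ)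
  (hnot : ¬ Filter.Tendsto Φ Filter.atTop (nhds 1))

include hpos

lemma hQ1 : ∀ τ : ℝ, (-1 : ℝ) ≤ (Φ τ)⁻¹ ^ 3 - 1 := by
  intro τ
  have := hpos τ
  have : 0 < (Φ τ)⁻¹ ^ 3 := by positivity
  linarith

/-- Φ ≥ 2 on a tail gives Q ≤ -1/2 there -/
lemma hQsmall {T : ℝ} (h : ∀ τ ≥ T, (2:ℝ) ≤ Φ τ) :
    ∀ τ ≥ T, (Φ τ)⁻¹ ^ 3 - 1 ≤ -(1/2 : ℝ) := by
  intro τ hτ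
  have h2 := h τ hτ
  have h3 : (Φ τ)⁻¹ ≤ 1/2 := by
    rw [inv_le_comm₀ (by linarith) (by norm_num)]; linarith
  have h4 : (0:ℝ) < (Φ τ)⁻¹ := by positivity
  nlinarith [pow_le_pow_left₀ (le_of_lt h4) h3 3]

include hΦ hW hΨ

/-- W eventually ≤ c < 0 : impossible -/
lemma L1a {T c : ℝ} (hc : c < 0) (h : ∀ τ ≥ T, W τ ≤ c) : False := by
  obtain ⟨T', _, h2⟩ := tail_le hΦ hc h (-1)
  have := h2 T' le_rfl
  have := hpos T'
  linarith

lemma L1b {T c : ℝ} (hc : c < 0) (h : ∀ τ ≥ T, Ψ τ ≤ c) : False := by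
  obtain ⟨T', _, h2⟩ := tail_le hW hc h (-1)
  exact L1a hpos hΦ hW hΨ (by norm_num : (-1:ℝ) < 0) h2

lemma L1c {T c : ℝ} (hc : c < 0) (h : ∀ τ ≥ T, (Φ τ)⁻¹ ^ 3 - 1 ≤ c) : False := by
  obtain ⟨T', _, h2⟩ := tail_le hΨ hc h (-1)
  exact L1b hpos hΦ hW hΨ (by norm_num : (-1:ℝ) < 0) h2

lemma L2a {T c : ℝ} (hc : 0 < c) (h : ∀ τ ≥ T, c ≤ W τ) : False := by
  obtain ⟨T2, hT2, h2⟩ := tail_ge hΦ hc h 2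
  have h3 := hQsmall hpos h2
  obtain ⟨T3, hT3, h4⟩ := tail_le hΨ (by norm_num : -(1/2:ℝ) < 0) h3 (-1)
  obtain ⟨T4, hT4, h5⟩ := tail_le hW (by norm_num : (-1:ℝ) < 0) h4 0
  have h6 := h5 (max T T4) (le_max_right _ _)
  have h7 := h (max T T4) (le_max_left _ _)
  linarith

lemma L2b {T c : ℝ} (hc : 0 < c) (h : ∀ τ ≥ T, c ≤ Ψ τ) : False := by
  obtain ⟨T', _, h2⟩ := tail_ge hW hc h 1
  exact L2a hpos hΦ hW hΨ (by norm_num : (0:ℝ) < 1) h2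

lemma L2c {T c : ℝ} (hc : 0 < c) (h : ∀ τ ≥ T, c ≤ (Φ τ)⁻¹ ^ 3 - 1) : False := by
  obtain ⟨T', _, h2⟩ := tail_ge hΨ hc h 1
  exact L2b hpos hΦ hW hΨ (by norm_num : (0:ℝ) < 1) h2



/-- frequently Φ³ < 2 -/
lemma freq_small : ∀ T : ℝ, ∃ σ ≥ T, (Φ σ)^3 < 2 := by
  intro T
  by_contra hcon
  push_neg at hcon
  apply L1c hpos hΦ hW hΨ (c := -(1/2:ℝ)) (by norm_num) (T := T)
  intro τ hτ
  have h := hcon τ hτ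
  have hx := hpos τ
  have h1 : (Φ τ)⁻¹ ^ 3 = ((Φ τ)^3)⁻¹ := by rw [inv_pow]
  have h2 : ((Φ τ)^3)⁻¹ ≤ 1/2 := by
    rw [inv_le_comm₀ (by positivity) (by norm_num)]; linarith
  rw [h1]; linarith

lemma hH : ∀ τ, HasDerivAt (Hfun Φ W Ψ) ((Ψ τ)^2) τ := by
  intro τ
  have hφ := (hpos τ).ne'
  have hne : (2 * (Φ τ)^2) ≠ 0 := by positivity
  have h1 : HasDerivAt (fun t => 2 * (Φ t)^2) (2 * (((2:ℕ) : ℝ) * Φ τ ^ (2-1) * W τ)) τ :=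
    ((hΦ τ).pow 2).const_mul 2
  have h2 := h1.inv hne
  have h3 := (((hW τ).mul (hΨ τ)).add (hΦ τ)).add h2
  refine h3.congr_deriv ?_
  field_simp
  ring


lemma Hmono {a b : ℝ} (hab : a ≤ b) : Hfun Φ W Ψ a ≤ Hfun Φ W Ψ b := by
  have := growth_ge (hH hpos hΦ hW hΨ) (c := 0) hab (fun t _ => sq_nonneg _)
  linarith

lemma psi_tail (hB : BddAbove (range (Hfun Φ W Ψ))) {p : ℝ} (hp : 0 < p) (hp1 : p ≤ 1) :
    ∃ T, ∀ ξ ≥ T, |Ψ ξ| ≤ p := by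
  set H := Hfun Φ W Ψ with hHdef
  set hs := sSup (range H) with hhs
  have hub : ∀ τ, H τ ≤ hs := fun τ => le_csSup hB (mem_range_self τ)
  have hT1 : ∃ T1, hs - p^3/9 ≤ H T1 := by
    by_contra hcon
    push_neg at hcon
    have : hs ≤ hs - p^3/9 := csSup_le (range_nonempty _)
      (fun x ⟨t, ht⟩ => ht ▸ le_of_lt (hcon t))
    nlinarith [pow_pos hp 3]
  obtain ⟨T1, hT1⟩ := hT1
  refine ⟨T1 + p, fun ξ hξ => ?_⟩
  rw [abs_le]
  constructor
  · -- Ψ ξ ≥ -p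
    by_contra hcon
    push_neg at hcon
    have hstep : ∀ t ∈ Icc (ξ - p/2) ξ, Ψ t ≤ -p/2 := by
      intro t ht
      have h1 : Ψ t + (-1) * (ξ - t) ≤ Ψ ξ :=
        growth_ge (f := Ψ) hΨ ht.2 (fun u _ => hQ1 hpos u)
      linarith [ht.2, (by linarith [ht.1] : ξ - t ≤ p/2)]
    have hinc : H (ξ - p/2) + (p^2/4) * (ξ - (ξ - p/2)) ≤ H ξ := by
      apply growth_ge (hH hpos hΦ hW hΨ) (by linarith)
      intro u hu
      have := hstep u ⟨le_of_lt hu.1, le_of_lt hu.2⟩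
      nlinarith
    have h2 : hs - p^3/9 ≤ H (ξ - p/2) :=
      le_trans hT1 (Hmono hpos hΦ hW hΨ (by linarith))
    have h3 := hub ξ
    have he : p^2/4 * (ξ - (ξ - p/2)) = p^3/8 := by ring
    nlinarith [pow_pos hp 3]
  · -- Ψ ξ ≤ p
    by_contra hcon
    push_neg at hcon
    have hstep : ∀ t ∈ Icc ξ (ξ + p/2), p/2 ≤ Ψ t := by
      intro t ht
      have h1 : Ψ ξ + (-1) * (t - ξ) ≤ Ψ t :=
        growth_ge (f := Ψ) hΨ ht.1 (fun u _ => hQ1 hpos u)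
      linarith [ht.1, (by linarith [ht.2] : t - ξ ≤ p/2)]
    have hinc : H ξ + (p^2/4) * ((ξ + p/2) - ξ) ≤ H (ξ + p/2) := by
      apply growth_ge (hH hpos hΦ hW hΨ) (by linarith)
      intro u hu
      have := hstep u ⟨le_of_lt hu.1, le_of_lt hu.2⟩
      nlinarith
    have h2 : hs - p^3/9 ≤ H ξ := le_trans hT1 (Hmono hpos hΦ hW hΨ (by linarith))
    have h3 := hub (ξ + p/2)
    have he : p^2/4 * ((ξ + p/2) - ξ) = p^3/8 := by ring
    nlinarith [pow_pos hp 3]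

lemma w_tail (hB : BddAbove (range (Hfun Φ W Ψ))) :
    ∃ T, ∀ σ ≥ T, |W σ| ≤ 1 := by
  obtain ⟨T, hT⟩ := psi_tail hpos hΦ hW hΨ hB (p := 1/100) (by norm_num) (by norm_num)
  refine ⟨T, fun σ hσ => ?_⟩
  rw [abs_le]
  constructor
  · -- W σ ≥ -1
    by_contra hcon
    push_neg at hcon
    have hWneg : ∀ t ∈ Icc σ (σ + 50), W t ≤ -1/2 := by
      intro t ht
      have h1 : W t ≤ W σ + (1/100) * (t - σ) := by
        apply growth_le hW ht.1
        intro u hu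
        have := hT u (by linarith [hu.1])
        exact (abs_le.1 this).2
      have := ht.2
      nlinarith
    have hΦbig : ∀ t ∈ Icc σ (σ + 46), 2 ≤ Φ t := by
      intro t ht
      have h1 : Φ (σ + 50) ≤ Φ t + (-1/2) * ((σ + 50) - t) := by
        apply growth_le hΦ (by linarith [ht.2])
        intro u hu
        exact hWneg u ⟨by linarith [ht.1, hu.1], le_of_lt hu.2⟩
      have h2 := hpos (σ + 50)
      have := ht.2
      nlinarith
    have hQ : ∀ u ∈ Ioo σ (σ + 46), (Φ u)⁻¹ ^ 3 - 1 ≤ -(1/2) := by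
      intro u hu
      have h2 := hΦbig u ⟨le_of_lt hu.1, le_of_lt hu.2⟩
      have h3 : (Φ u)⁻¹ ≤ 1/2 := by
        rw [inv_le_comm₀ (by linarith) (by norm_num)]; linarith
      have h4 : (0:ℝ) < (Φ u)⁻¹ := by positivity
      nlinarith [pow_le_pow_left₀ (le_of_lt h4) h3 3]
    have h5 : Ψ (σ + 46) ≤ Ψ σ + (-(1/2)) * ((σ + 46) - σ) :=
      growth_le hΨ (by linarith) hQ
    have h6 := (abs_le.1 (hT σ hσ)).2
    have h7 := (abs_le.1 (hT (σ + 46) (by linarith))).1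
    nlinarith
  · -- W σ ≤ 1
    by_contra hcon
    push_neg at hcon
    have hWpos : ∀ t ∈ Icc σ (σ + 50), 1/2 ≤ W t := by
      intro t ht
      have h1 : W σ + (-1/100) * (t - σ) ≤ W t := by
        apply growth_ge hW ht.1
        intro u hu
        have := hT u (by linarith [hu.1])
        linarith [(abs_le.1 this).1]
      have := ht.2
      nlinarith
    have hΦbig : ∀ t ∈ Icc (σ + 4) (σ + 50), 2 ≤ Φ t := by
      intro t ht
      have h1 : Φ σ + (1/2) * (t - σ) ≤ Φ t := by
        apply growth_ge hΦ (by linarith [ht.1])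
        intro u hu
        exact hWpos u ⟨le_of_lt hu.1, by linarith [hu.2, ht.2]⟩
      have h2 := hpos σ
      have := ht.1
      nlinarith
    have hQ : ∀ u ∈ Ioo (σ + 4) (σ + 50), (Φ u)⁻¹ ^ 3 - 1 ≤ -(1/2) := by
      intro u hu
      have h2 := hΦbig u ⟨le_of_lt hu.1, le_of_lt hu.2⟩
      have h3 : (Φ u)⁻¹ ≤ 1/2 := by
        rw [inv_le_comm₀ (by linarith) (by norm_num)]; linarith
      have h4 : (0:ℝ) < (Φ u)⁻¹ := by positivity
      nlinarith [pow_le_pow_left₀ (le_of_lt h4) h3 3]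
    have h5 : Ψ (σ + 50) ≤ Ψ (σ + 4) + (-(1/2)) * ((σ + 50) - (σ + 4)) :=
      growth_le hΨ (by linarith) hQ
    have h6 := (abs_le.1 (hT (σ + 4) (by linarith))).2
    have h7 := (abs_le.1 (hT (σ + 50) (by linarith))).1
    nlinarith


lemma phi_tail_one (hB : BddAbove (range (Hfun Φ W Ψ))) {ρ : ℝ} (hρ : 0 < ρ) (hρ2 : ρ ≤ 1/2) :
    ∃ T, ∀ τ ≥ T, |Φ τ - 1| ≤ ρ := by
  have hp : (0:ℝ) < ρ^2/64 := by positivity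
  have hp1 : ρ^2/64 ≤ 1 := by nlinarith
  obtain ⟨T1, hT1⟩ := psi_tail hpos hΦ hW hΨ hB hp hp1
  obtain ⟨T2, hT2⟩ := w_tail hpos hΦ hW hΨ hB
  refine ⟨max T1 T2, fun σ hσ => ?_⟩
  have hσ1 : T1 ≤ σ := le_trans (le_max_left _ _) hσ
  have hσ2 : T2 ≤ σ := le_trans (le_max_right _ _) hσ
  by_contra hcon
  push_neg at hcon
  rcases lt_abs.1 hcon with hbig | hsmall
  · -- Φ σ > 1 + ρ
    have hΦlb : ∀ t ∈ Icc σ (σ + ρ/5), 1 + ρ/2 ≤ Φ t := by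
      intro t ht
      have h1 : Φ σ + (-1) * (t - σ) ≤ Φ t := by
        apply growth_ge hΦ ht.1
        intro u hu
        have := hT2 u (by linarith [hu.1])
        linarith [(abs_le.1 this).1]
      have := ht.2
      linarith
    have hQ : ∀ u ∈ Ioo σ (σ + ρ/5), (Φ u)⁻¹ ^ 3 - 1 ≤ -(ρ/4) := by
      intro u hu
      have h2 := hΦlb u ⟨le_of_lt hu.1, le_of_lt hu.2⟩
      have hx : (0:ℝ) < Φ u := hpos u
      have hx3 : (1 + ρ/2)^3 ≤ (Φ u)^3 := pow_le_pow_left₀ (by linarith) h2 3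
      have hkey : 1 ≤ (1 - ρ/4) * (Φ u)^3 := by nlinarith
      have hpow : (0:ℝ) < (Φ u)^3 := by positivity
      have h3 : (Φ u)⁻¹ ^ 3 ≤ 1 - ρ/4 := by
        rw [inv_pow]
        have hc : ((Φ u)^3)⁻¹ * ((Φ u)^3) = 1 := inv_mul_cancel₀ hpow.ne'
        nlinarith [inv_pos.2 hpow]
      linarith
    have h5 : Ψ (σ + ρ/5) ≤ Ψ σ + (-(ρ/4)) * ((σ + ρ/5) - σ) :=
      growth_le (f := Ψ) hΨ (by linarith) hQ
    have h6 := (abs_le.1 (hT1 σ hσ1)).2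
    have h7 := (abs_le.1 (hT1 (σ + ρ/5) (by linarith))).1
    nlinarith
  · -- Φ σ < 1 - ρ
    have hbig : Φ σ < 1 - ρ := by linarith
    have hΦub : ∀ t ∈ Icc σ (σ + ρ/5), Φ t ≤ 1 - ρ/2 := by
      intro t ht
      have h1 : Φ t ≤ Φ σ + 1 * (t - σ) := by
        apply growth_le hΦ ht.1
        intro u hu
        have := hT2 u (by linarith [hu.1])
        linarith [(abs_le.1 this).2]
      have := ht.2
      linarith
    have hQ : ∀ u ∈ Ioo σ (σ + ρ/5), ρ/4 ≤ (Φ u)⁻¹ ^ 3 - 1 := by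
      intro u hu
      have h2 := hΦub u ⟨le_of_lt hu.1, le_of_lt hu.2⟩
      have hx : (0:ℝ) < Φ u := hpos u
      have hx3 : (Φ u)^3 ≤ (1 - ρ/2)^3 := pow_le_pow_left₀ (le_of_lt hx) h2 3
      have hkey : (1 + ρ/4) * (Φ u)^3 ≤ 1 := by nlinarith
      have hpow : (0:ℝ) < (Φ u)^3 := by positivity
      have h3 : 1 + ρ/4 ≤ (Φ u)⁻¹ ^ 3 := by
        rw [inv_pow]
        have hc : ((Φ u)^3)⁻¹ * ((Φ u)^3) = 1 := inv_mul_cancel₀ hpow.ne'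
        nlinarith [inv_pos.2 hpow]
      linarith
    have h5 : Ψ σ + (ρ/4) * ((σ + ρ/5) - σ) ≤ Ψ (σ + ρ/5) :=
      growth_ge (f := Ψ) hΨ (by linarith) hQ
    have h6 := (abs_le.1 (hT1 σ hσ1)).1
    have h7 := (abs_le.1 (hT1 (σ + ρ/5) (by linarith))).2
    nlinarith

include hnot in
lemma Hbdd_false (hB : BddAbove (range (Hfun Φ W Ψ))) : False := by
  apply hnot
  rw [Metric.tendsto_atTop]
  intro ε hε
  have hρ : (0:ℝ) < min (ε/2) (1/2) := by
    apply lt_min (by linarith) (by norm_num)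
  obtain ⟨T, hT⟩ := phi_tail_one hpos hΦ hW hΨ hB hρ (min_le_right _ _)
  refine ⟨T, fun τ hτ => ?_⟩
  have := hT τ hτ
  rw [Real.dist_eq]
  have h2 : min (ε/2) (1/2) ≤ ε/2 := min_le_left _ _
  linarith [this]


include hnot


/-- if Φ tends to a positive limit, contradiction -/
lemma tendsto_pos_false {L : ℝ} (hL : 0 < L) (hlim : Tendsto Φ atTop (nhds L)) : False := by
  have hQlim : Tendsto (fun τ => (Φ τ)⁻¹ ^ 3 - 1) atTop (nhds (L⁻¹ ^ 3 - 1)) :=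
    ((hlim.inv₀ (ne_of_gt hL)).pow 3).sub_const 1
  rcases lt_trichotomy (L⁻¹ ^ 3 - 1) 0 with hq | hq | hq
  · have hev : ∀ᶠ τ in atTop, (fun τ => (Φ τ)⁻¹ ^ 3 - 1) τ ≤ (L⁻¹ ^ 3 - 1) / 2 :=
      hQlim.eventually (eventually_le_nhds (by linarith))
    obtain ⟨T, hT⟩ := eventually_atTop.1 hev
    exact L1c hpos hΦ hW hΨ (by linarith) hT
  · have hL1 : L = 1 := by
      have hx : 0 < L⁻¹ := by positivity
      have h1 : L⁻¹ = 1 := by nlinarith [sq_nonneg (L⁻¹ - 1), sq_nonneg (L⁻¹ + 1)]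
      exact inv_eq_one.1 h1
    exact hnot (hL1 ▸ hlim)
  · have hev : ∀ᶠ τ in atTop, (L⁻¹ ^ 3 - 1) / 2 ≤ (fun τ => (Φ τ)⁻¹ ^ 3 - 1) τ :=
      hQlim.eventually (eventually_ge_nhds (by linarith))
    obtain ⟨T, hT⟩ := eventually_atTop.1 hev
    exact L2c hpos hΦ hW hΨ (by linarith) hT

/-- zeros of W occur arbitrarily late -/
lemma zeros_late : ∀ T : ℝ, ∃ ζ ≥ T, W ζ = 0 := by
  intro T
  by_contra hcon
  push_neg at hcon
  have hcont : Continuous W := continuous_iff_continuousAt.2 (fun t => (hW t).continuousAt)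
  -- W has constant sign on [T, ∞)
  have hsign : (∀ τ ≥ T, 0 < W τ) ∨ (∀ τ ≥ T, W τ < 0) := by
    rcases (hcon T le_rfl).lt_or_gt with h0 | h0
    · right
      intro τ hτ
      rcases (hcon τ hτ).lt_or_gt with h1 | h1
      · exact h1
      · exfalso
        obtain ⟨ζ, hζ, hζ0⟩ := intermediate_value_Icc hτ (hcont.continuousOn)
          (⟨le_of_lt h0, le_of_lt h1⟩ : (0:ℝ) ∈ Icc (W T) (W τ))
        exact hcon ζ (le_trans hζ.1 (le_refl _) |>.trans (le_refl _) |> fun _ => hζ.1) hζ0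
    · left
      intro τ hτ
      rcases (hcon τ hτ).lt_or_gt with h1 | h1
      · exfalso
        obtain ⟨ζ, hζ, hζ0⟩ := intermediate_value_Icc' hτ (hcont.continuousOn)
          (⟨le_of_lt h1, le_of_lt h0⟩ : (0:ℝ) ∈ Icc (W τ) (W T))
        exact hcon ζ hζ.1 hζ0
      · exact h1
  -- monotone convergence in each case
  rcases hsign with hsgn | hsgn
  · -- Φ increasing on [T,∞)
    have hmono : ∀ s t : ℝ, T ≤ s → s ≤ t → Φ s ≤ Φ t := by
      intro s t hs hst
      have := growth_ge hΦ (c := 0) hst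
        (fun u hu => le_of_lt (hsgn u (le_trans hs (le_of_lt hu.1))))
      linarith
    -- Φ < 2 on tail
    have hbd : ∀ τ ≥ T, Φ τ < 2 := by
      intro τ hτ
      by_contra h2
      push_neg at h2
      have h3 : ∀ σ ≥ τ, (2:ℝ) ≤ Φ σ := fun σ hσ => le_trans h2 (hmono τ σ hτ hσ)
      exact L1c hpos hΦ hW hΨ (by norm_num : -(1/2:ℝ) < 0) (hQsmall hpos h3)
    set g : ℝ → ℝ := fun t => Φ (max t T) with hg
    have hgm : Monotone g := fun s t hst =>
      hmono _ _ (le_max_right _ _) (max_le_max hst le_rfl)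
    have hgb : BddAbove (range g) := by
      refine ⟨2, fun x hx => ?_⟩
      obtain ⟨t, rfl⟩ := hx
      exact le_of_lt (hbd _ (le_max_right _ _))
    have hgt : Tendsto g atTop (nhds (⨆ t, g t)) := tendsto_atTop_ciSup hgm hgb
    have heq : Φ =ᶠ[atTop] g := by
      filter_upwards [eventually_ge_atTop T] with τ hτ
      simp [hg, max_eq_left hτ]
    have hlim : Tendsto Φ atTop (nhds (⨆ t, g t)) := hgt.congr' heq.symm
    have hLpos : 0 < ⨆ t, g t := lt_of_lt_of_le (hpos (max T T)) (le_ciSup hgb T)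
    exact tendsto_pos_false hpos hΦ hW hΨ hnot hLpos hlim
  · -- Φ decreasing
    have hmono : ∀ s t : ℝ, T ≤ s → s ≤ t → Φ t ≤ Φ s := by
      intro s t hs hst
      have := growth_ge (f := fun u => -Φ u) (f' := fun u => -W u) (fun u => (hΦ u).neg)
        (c := 0) hst (fun u hu => by
          have := hsgn u (le_trans hs (le_of_lt hu.1)); simp; linarith)
      simp at this; linarith
    set g : ℝ → ℝ := fun t => Φ (max t T) with hg
    have hgm : Antitone g := fun s t hst =>
      hmono _ _ (le_max_right _ _) (max_le_max hst le_rfl)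
    have hgb : BddBelow (range g) := by
      refine ⟨0, fun x hx => ?_⟩
      obtain ⟨t, rfl⟩ := hx
      exact le_of_lt (hpos _)
    have hgt : Tendsto g atTop (nhds (⨅ t, g t)) := tendsto_atTop_ciInf hgm hgb
    have heq : Φ =ᶠ[atTop] g := by
      filter_upwards [eventually_ge_atTop T] with τ hτ
      simp [hg, max_eq_left hτ]
    have hlim : Tendsto Φ atTop (nhds (⨅ t, g t)) := hgt.congr' heq.symm
    have hL0 : 0 ≤ ⨅ t, g t := le_ciInf (fun t => le_of_lt (hpos _))
    rcases hL0.lt_or_eq with hL | hL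
    · exact tendsto_pos_false hpos hΦ hW hΨ hnot hL hlim
    · -- limit 0 : Q ≥ 1 eventually
      have hev : ∀ᶠ τ in atTop, Φ τ ≤ 1/2 := by
        rw [← hL] at hlim
        exact hlim.eventually (eventually_le_nhds (by norm_num))
      obtain ⟨T2, hT2⟩ := eventually_atTop.1 hev
      apply L2c hpos hΦ hW hΨ (c := (1:ℝ)) (by norm_num) (T := T2)
      intro τ hτ
      have h1 := hT2 τ hτ
      have h2 := hpos τ
      have h3 : (2:ℝ) ≤ (Φ τ)⁻¹ := by
        rw [le_inv_comm₀ (by norm_num) h2]; linarith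
      nlinarith [pow_le_pow_left₀ (by norm_num : (0:ℝ) ≤ 2) h3 3]
  

omit hnot


lemma zero_big {K TK T0 ε : ℝ} (hε : 0 < ε) (hK : K = 3 + (ε^2)⁻¹)
    (hHK : ∀ τ ≥ TK, K ≤ Hfun Φ W Ψ τ) (hΦε : ∀ τ ≥ T0, ε ≤ Φ τ)
    {ζ : ℝ} (hζK : TK ≤ ζ) (hζ0 : T0 ≤ ζ) (hWζ : W ζ = 0) : 2 ≤ Φ ζ := by
  have hH := hHK ζ hζK
  have hx := hpos ζ
  rw [Hfun] at hH
  simp only [hWζ, zero_mul, zero_add] at hH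
  -- hH : K ≤ Φ ζ + (2 * (Φ ζ)^2)⁻¹
  rcases le_or_gt (Φ ζ) 1 with h1 | h1
  · exfalso
    have hinv : K - 1 ≤ (2 * (Φ ζ)^2)⁻¹ := by linarith
    have hq : (0:ℝ) < 2 * (Φ ζ)^2 := by positivity
    have hc : (2 * (Φ ζ)^2)⁻¹ * (2 * (Φ ζ)^2) = 1 := inv_mul_cancel₀ hq.ne'
    have h2 : (K - 1) * (2 * (Φ ζ)^2) ≤ 1 := by
      nlinarith [inv_pos.2 hq]
    have hεc : (ε^2)⁻¹ * ε^2 = 1 := inv_mul_cancel₀ (by positivity)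
    have h3 : (ε^2)⁻¹ * (2 * (Φ ζ)^2) ≤ 1 := by
      nlinarith [hq]
    -- so 2 Φζ² ≤ ε²
    have h4 : 2 * (Φ ζ)^2 ≤ ε^2 := by
      have hεp : (0:ℝ) < (ε^2)⁻¹ := by positivity
      nlinarith
    have h5 := hΦε ζ hζ0
    nlinarith
  · have h2 : (0:ℝ) < 2 * (Φ ζ)^2 := by positivity
    have h3 : (2 * (Φ ζ)^2)⁻¹ ≤ 1/2 := by
      rw [inv_le_comm₀ h2 (by norm_num)]
      nlinarith
    have : (0:ℝ) < (ε^2)⁻¹ := by positivity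
    linarith

lemma goal2 (hHKall : ∀ K, ∃ T, ∀ τ ≥ T, K ≤ Hfun Φ W Ψ τ)
    (hz : ∀ T, ∃ ζ ≥ T, W ζ = 0)
    {ε : ℝ} (hε : 0 < ε) {T0 : ℝ} (hΦε : ∀ τ ≥ T0, ε ≤ Φ τ) : False := by
  have hcontW : Continuous W := continuous_iff_continuousAt.2 (fun t => (hW t).continuousAt)
  obtain ⟨TK, hHK⟩ := hHKall (3 + (ε^2)⁻¹)
  -- a zero beyond max TK T0
  obtain ⟨ζs, hζs, hWζs⟩ := hz (max TK T0)
  -- a small point beyond ζs + 1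
  obtain ⟨σ, hσ, hσsmall⟩ := freq_small hpos hΦ hW hΨ (ζs + 1)
  have hΦσ : Φ σ < 2 := by
    by_contra h2
    push_neg at h2
    have h8 := pow_le_pow_left₀ (by norm_num : (0:ℝ) ≤ 2) h2 3
    norm_num at h8
    linarith
  have hbig : ∀ ζ, TK ≤ ζ → T0 ≤ ζ → W ζ = 0 → 2 ≤ Φ ζ := fun ζ h1 h2 h3 =>
    zero_big hpos hΦ hW hΨ hε rfl hHK hΦε h1 h2 h3
  -- last zero before σ
  set Z := {τ ∈ Icc ζs σ | W τ = 0} with hZ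
  have hZc : IsCompact Z := isCompact_Icc.inter_right (isClosed_singleton.preimage hcontW)
  have hZne : Z.Nonempty := ⟨ζs, ⟨⟨le_refl _, by linarith⟩, hWζs⟩⟩
  set z₁ := sSup Z with hz₁
  have hz₁Z : z₁ ∈ Z := hZc.sSup_mem hZne
  have hWz₁ : W z₁ = 0 := hz₁Z.2
  have hz₁big : 2 ≤ Φ z₁ :=
    hbig z₁ (le_trans (le_max_left _ _) (le_trans hζs hz₁Z.1.1))
      (le_trans (le_max_right _ _) (le_trans hζs hz₁Z.1.1)) hWz₁
  have hz₁σ : z₁ < σ := lt_of_le_of_ne hz₁Z.1.2 (fun h => by rw [h] at hz₁big; linarith)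
  have hno1 : ∀ t, z₁ < t → t ≤ σ → W t ≠ 0 := by
    intro t ht1 ht2 hWt
    have : t ∈ Z := ⟨⟨le_trans hz₁Z.1.1 (le_of_lt ht1), ht2⟩, hWt⟩
    have := le_csSup hZc.bddAbove this
    linarith
  have hWσ : W σ ≠ 0 := hno1 σ hz₁σ le_rfl
  rcases hWσ.lt_or_gt with hWσn | hWσp
  · -- W σ < 0 : next zero z₂, Φ decreasing to it
    set Z2 := {τ ∈ Ici σ | W τ = 0} with hZ2
    have hZ2c : IsClosed Z2 := isClosed_Ici.inter (isClosed_singleton.preimage hcontW)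
    obtain ⟨ζ2, hζ2, hWζ2⟩ := hz σ
    have hZ2ne : Z2.Nonempty := ⟨ζ2, hζ2, hWζ2⟩
    set z₂ := sInf Z2 with hz₂
    have hz₂Z : z₂ ∈ Z2 := hZ2c.csInf_mem hZ2ne ⟨σ, fun x hx => hx.1⟩
    have hWz₂ : W z₂ = 0 := hz₂Z.2
    have hσz₂ : σ < z₂ := lt_of_le_of_ne hz₂Z.1 (fun h => hWσ (h ▸ hWz₂))
    have hno2 : ∀ t, σ ≤ t → t < z₂ → W t ≠ 0 := by
      intro t ht1 ht2 hWt
      have : t ∈ Z2 := ⟨ht1, hWt⟩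
      have := csInf_le ⟨σ, fun x hx => hx.1⟩ this
      linarith
    have hWneg : ∀ t ∈ Ioo σ z₂, W t ≤ 0 := by
      intro t ht
      by_contra hcon
      push_neg at hcon
      obtain ⟨ξ, hξ, hWξ⟩ := intermediate_value_Icc (le_of_lt ht.1) hcontW.continuousOn
        (⟨le_of_lt hWσn, le_of_lt hcon⟩ : (0:ℝ) ∈ Icc (W σ) (W t))
      exact hno2 ξ hξ.1 (lt_of_le_of_lt hξ.2 ht.2) hWξ
    have hd : Φ z₂ ≤ Φ σ + 0 * (z₂ - σ) := growth_le hΦ (le_of_lt hσz₂) hWneg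
    have hz₂big : 2 ≤ Φ z₂ :=
      hbig z₂ (le_trans (le_max_left _ _) (by linarith [hζs]))
        (le_trans (le_max_right _ _) (by linarith [hζs])) hWz₂
    nlinarith
  · -- W σ > 0 : Φ increasing from z₁
    have hWpos : ∀ t ∈ Ioo z₁ σ, 0 ≤ W t := by
      intro t ht
      by_contra hcon
      push_neg at hcon
      obtain ⟨ξ, hξ, hWξ⟩ := intermediate_value_Icc (le_of_lt ht.2) hcontW.continuousOn
        (⟨le_of_lt hcon, le_of_lt hWσp⟩ : (0:ℝ) ∈ Icc (W t) (W σ))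
      exact hno1 ξ (lt_of_lt_of_le ht.1 hξ.1) hξ.2 hWξ
    have hd : Φ z₁ + 0 * (σ - z₁) ≤ Φ σ := growth_ge hΦ (le_of_lt hz₁σ) hWpos
    nlinarith


set_option maxHeartbeats 2000000 in
lemma blowup {τ₀ M : ℝ} (hM : 1 ≤ M) (hW0 : W τ₀ = 0) (hΨ0 : 0 ≤ Ψ τ₀)
    (hmδ : Φ τ₀ ≤ 1/(500*(1+M))) : ∃ τ ≥ τ₀, M < Φ τ := by
  have hcontΦ : Continuous Φ := continuous_iff_continuousAt.2 (fun t => (hΦ t).continuousAt)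
  set m := Φ τ₀ with hm
  have hm0 : 0 < m := hpos τ₀
  have hm1000 : m ≤ 1/1000 := by
    have h1 : 1/(500*(1+M)) ≤ 1/1000 := by
      rw [div_le_div_iff₀ (by nlinarith) (by norm_num)]
      nlinarith
    linarith
  have hm3 : 0 < m^3 := by positivity
  have hm316 : m^3 ≤ 1/16 := by
    have := pow_le_pow_left₀ hm0.le hm1000 3
    norm_num at this; linarith
  set c := 1/(8*m^3) - 1 with hc
  set C := 1/m^3 with hC
  have hC0 : 0 < C := by positivity
  have hc0 : 0 < c := by
    have h1 : 8*m^3 ≤ 1/2 := by linarith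
    have h2 : (2:ℝ) ≤ 1/(8*m^3) := by
      rw [le_div_iff₀ (by positivity)]; linarith
    rw [hc]; linarith
  have hcC : C/16 ≤ c := by
    rw [hc, hC]
    have h2 : (1/m^3)/16 * (m^3) = 1/16 := by field_simp
    have h3 : (1/(8*m^3) - 1) * m^3 = 1/8 - m^3 := by field_simp
    have h4 : (1/m^3)/16 * (m^3) ≤ (1/(8*m^3) - 1) * m^3 := by rw [h2, h3]; linarith
    exact (mul_le_mul_iff_of_pos_right hm3).1 h4
  -- Q lower bound when Φ ≤ 2m
  have hQc : ∀ u, Φ u ≤ 2*m → c ≤ (Φ u)⁻¹^3 - 1 := by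
    intro u h2
    have h1 := hpos u
    have h3 : (Φ u)^3 ≤ 8*m^3 := by nlinarith [pow_le_pow_left₀ h1.le h2 3]
    have h4 := inv_cube_lb h1 (by positivity : (0:ℝ) < 8*m^3) h3
    rw [hc]; linarith
  -- Q upper bound when Φ ≥ m
  have hQC : ∀ u, m ≤ Φ u → (Φ u)⁻¹^3 - 1 ≤ C := by
    intro u h2
    have h3 : m^3 ≤ (Φ u)^3 := pow_le_pow_left₀ hm0.le h2 3
    have h4 := inv_cube_ub hm3 h3
    rw [hC]; linarith
  clear_value m c C
  -- trajectory bounds while Φ < 2m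
  have key : ∀ b, τ₀ ≤ b → (∀ t, τ₀ ≤ t → t < b → Φ t < 2*m) →
      (∀ t ∈ Icc τ₀ b, Ψ τ₀ + c*(t - τ₀) ≤ Ψ t) ∧ (∀ t ∈ Icc τ₀ b, 0 ≤ W t) ∧
      (∀ t ∈ Icc τ₀ b, m ≤ Φ t) := by
    intro b hb hsm
    have hΨlb : ∀ t ∈ Icc τ₀ b, Ψ τ₀ + c*(t - τ₀) ≤ Ψ t := by
      intro t ht
      exact growth_ge hΨ ht.1 (fun u hu => hQc u (le_of_lt (hsm u hu.1.le (lt_of_lt_of_le hu.2 ht.2))))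
    have hWnn : ∀ t ∈ Icc τ₀ b, 0 ≤ W t := by
      intro t ht
      have h1 : W τ₀ + 0 * (t - τ₀) ≤ W t := by
        apply growth_ge hW ht.1
        intro u hu
        have h2 := hΨlb u ⟨hu.1.le, le_trans hu.2.le ht.2⟩
        nlinarith [hu.1]
      rw [hW0] at h1; linarith
    have hΦlb : ∀ t ∈ Icc τ₀ b, m ≤ Φ t := by
      intro t ht
      have h1 : Φ τ₀ + 0 * (t - τ₀) ≤ Φ t :=
        growth_ge hΦ ht.1 (fun u hu => hWnn u ⟨hu.1.le, le_trans hu.2.le ht.2⟩)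
      rw [← hm] at h1; linarith
    exact ⟨hΨlb, hWnn, hΦlb⟩
  -- the exit set S
  set S := {t ∈ Icc τ₀ (τ₀+m) | 2*m ≤ Φ t} with hS
  have hSclosed : IsClosed S := isClosed_Icc.inter (isClosed_Ici.preimage hcontΦ)
  have hSne : S.Nonempty := by
    by_contra hcon
    have hsm : ∀ t, τ₀ ≤ t → t < τ₀ + m → Φ t < 2*m := by
      intro t h1 h2
      by_contra h3
      push_neg at h3
      exact hcon ⟨t, ⟨⟨h1, h2.le⟩, h3⟩⟩
    obtain ⟨hΨlb, hWnn, hΦlb⟩ := key (τ₀+m) (by linarith) hsm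
    have hΦend : Φ (τ₀ + m) < 2*m := by
      by_contra h3
      push_neg at h3
      exact hcon ⟨τ₀+m, ⟨⟨by linarith, le_refl _⟩, h3⟩⟩
    -- chain to contradiction
    have step1 : ∀ t ∈ Icc (τ₀+m/3) (τ₀+m), c*(m/3) ≤ Ψ t := by
      intro t ht
      have h1 := hΨlb t ⟨by linarith [ht.1], ht.2⟩
      have h2 : m/3 ≤ t - τ₀ := by linarith [ht.1]
      nlinarith [mul_le_mul_of_nonneg_left h2 hc0.le, hΨ0]
    have step2 : Φ (τ₀+2*m/3) + (c*(m/3)*(m/3)) * ((τ₀+m) - (τ₀+2*m/3)) ≤ Φ (τ₀+m) := by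
      apply growth_ge hΦ (by linarith)
      intro u hu
      -- W u ≥ c*(m/3)*(m/3) for u ∈ Ioo (τ₀+2m/3) (τ₀+m)
      have h1 : W (τ₀+m/3) + (c*(m/3)) * (u - (τ₀+m/3)) ≤ W u := by
        apply growth_ge hW (by linarith [hu.1])
        intro v hv
        exact step1 v ⟨hv.1.le, le_trans hv.2.le (by linarith [hu.2])⟩
      have h2 := hWnn (τ₀+m/3) ⟨by linarith, by linarith⟩
      have h3 : m/3 ≤ u - (τ₀+m/3) := by linarith [hu.1]
      have h4 : (0:ℝ) ≤ c*(m/3) := mul_nonneg hc0.le (by linarith)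
      nlinarith [mul_le_mul_of_nonneg_left h3 h4]
    have h4 := hΦlb (τ₀+2*m/3) ⟨by linarith, by linarith⟩
    have h5 : c * m^3 ≥ 1/16 := by
      have : C/16 * m^3 = 1/16 := by rw [hC]; field_simp [hm3.ne']
      nlinarith
    nlinarith
  set τ₁ := sInf S with hτ₁
  have hτ₁S : τ₁ ∈ S := hSclosed.csInf_mem hSne ⟨τ₀, fun x hx => hx.1.1⟩
  have hτ₁Icc : τ₁ ∈ Icc τ₀ (τ₀+m) := hτ₁S.1
  have hΦτ₁ : 2*m ≤ Φ τ₁ := hτ₁S.2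
  have hτ₀τ₁ : τ₀ < τ₁ := by
    rcases lt_or_eq_of_le hτ₁Icc.1 with h | h
    · exact h
    · exfalso; rw [← h] at hΦτ₁; rw [← hm] at hΦτ₁; linarith
  have hpre : ∀ t, τ₀ ≤ t → t < τ₁ → Φ t < 2*m := by
    intro t h1 h2
    by_contra h3
    push_neg at h3
    have : t ∈ S := ⟨⟨h1, by linarith [hτ₁Icc.2]⟩, h3⟩
    have := csInf_le ⟨τ₀, fun x hx => hx.1.1⟩ this
    rw [← hτ₁] at this; linarith
  obtain ⟨hΨlb, hWnn, hΦlb⟩ := key τ₁ hτ₀τ₁.le hpre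
  set Δ := τ₁ - τ₀ with hΔ
  have hΔ0 : 0 < Δ := by rw [hΔ]; linarith
  have hΔm : Δ ≤ m := by rw [hΔ]; linarith [hτ₁Icc.2]
  clear_value Δ
  set A := Ψ τ₀ + C*Δ with hA
  have hA0 : 0 < A := by
    have := mul_pos hC0 hΔ0
    rw [hA]; linarith
  -- upper bounds
  have hΨub : ∀ t ∈ Icc τ₀ τ₁, Ψ t ≤ A := by
    intro t ht
    have h1 : Ψ t ≤ Ψ τ₀ + C * (t - τ₀) := by
      apply growth_le hΨ ht.1
      intro u hu
      exact hQC u (hΦlb u ⟨hu.1.le, le_trans hu.2.le ht.2⟩)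
    have h2 : t - τ₀ ≤ Δ := by rw [hΔ]; linarith [ht.2]
    have h3 := mul_le_mul_of_nonneg_left h2 hC0.le
    rw [hA]; linarith
  clear_value A
  have hWub : ∀ t ∈ Icc τ₀ τ₁, W t ≤ A * (t - τ₀) := by
    intro t ht
    have h1 : W t ≤ W τ₀ + A * (t - τ₀) :=
      growth_le hW ht.1 (fun u hu => hΨub u ⟨hu.1.le, le_trans hu.2.le ht.2⟩)
    rw [hW0] at h1; linarith
  have hΦub : Φ τ₁ ≤ m + (A*Δ) * Δ := by
    have h1 : Φ τ₁ ≤ Φ τ₀ + (A*Δ) * (τ₁ - τ₀) := by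
      apply growth_le hΦ hτ₀τ₁.le
      intro u hu
      have h2 := hWub u ⟨hu.1.le, hu.2.le⟩
      have h3 : u - τ₀ ≤ Δ := by rw [hΔ]; linarith [hu.2]
      have h4 : 0 ≤ u - τ₀ := by linarith [hu.1]
      have h5 : A*(u - τ₀) ≤ A*Δ := mul_le_mul_of_nonneg_left h3 hA0.le
      linarith
    rw [← hm, ← hΔ] at h1; linarith
  have hAΔ : m ≤ A * Δ^2 := by
    have h1 : (A*Δ)*Δ = A*Δ^2 := by ring
    linarith
  have hΨτ₁ : A/16 ≤ Ψ τ₁ := by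
    have h1 := hΨlb τ₁ ⟨hτ₀τ₁.le, le_refl _⟩
    rw [hA]  -- A opaque? need equation

    have h2 : C/16 * Δ ≤ c * Δ := mul_le_mul_of_nonneg_right hcC hΔ0.le
    rw [← hΔ] at h1
    linarith
  set P := (16*m)⁻¹ with hP
  have hP0 : 0 < P := by rw [hP]; positivity
  clear_value P
  have hPΨ : P ≤ Ψ τ₁ := by
    have h1 : 0 ≤ Ψ τ₁ := le_trans (by linarith : (0:ℝ) ≤ A/16) hΨτ₁
    have hA16 : A ≤ 16 * Ψ τ₁ := by linarith
    have h2 : m ≤ 16 * Ψ τ₁ * Δ^2 :=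
      le_trans hAΔ (mul_le_mul_of_nonneg_right hA16 (sq_nonneg Δ))
    have hΔ2 : Δ^2 ≤ m^2 := pow_le_pow_left₀ hΔ0.le hΔm 2
    have h2b : 16 * Ψ τ₁ * Δ^2 ≤ 16 * Ψ τ₁ * m^2 :=
      mul_le_mul_of_nonneg_left hΔ2 (by linarith : (0:ℝ) ≤ 16 * Ψ τ₁)
    have h3 : m ≤ 16 * Ψ τ₁ * m^2 := by linarith
    have h4 : P * (16 * m^2) = m := by rw [hP]; field_simp [hm0.ne']
    have h5 : P * (16*m^2) ≤ Ψ τ₁ * (16*m^2) := by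
      rw [h4]
      calc m ≤ 16 * Ψ τ₁ * m^2 := h3
      _ = Ψ τ₁ * (16*m^2) := by ring
    exact le_of_mul_le_mul_right h5 (by nlinarith [pow_pos hm0 2])
  have hP31 : 31*(1+M) ≤ P := by
    have h1 : m * (500*(1+M)) ≤ 1 := by
      have := (le_div_iff₀ (by nlinarith : (0:ℝ) < 500*(1+M))).1 hmδ
      linarith
    have h2 : 16*m*(31*(1+M)) ≤ 1 := by
      nlinarith [mul_nonneg hm0.le (by linarith : (0:ℝ) ≤ M)]
    have h4 : 16*m ≤ 1/(31*(1+M)) := (le_div_iff₀ (by nlinarith)).2 (by linarith)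
    have h5 := one_div_le_one_div_of_le (by linarith : (0:ℝ) < 16*m) h4
    rw [one_div_one_div] at h5
    rw [hP, inv_eq_one_div]
    exact h5
  -- stage 2
  have hΨs : ∀ s ∈ Icc τ₁ (τ₁ + P/2), P/2 ≤ Ψ s := by
    intro s hs
    have h1 : Ψ τ₁ + (-1) * (s - τ₁) ≤ Ψ s :=
      growth_ge hΨ hs.1 (fun u _ => hQ1 hpos u)
    have h2 : s - τ₁ ≤ P/2 := by linarith [hs.2]
    linarith
  have hWs : ∀ s ∈ Icc (τ₁ + P/4) (τ₁ + P/2), P^2/8 ≤ W s := by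
    intro s hs
    have h1 : W τ₁ + (P/2) * (s - τ₁) ≤ W s := by
      apply growth_ge hW (by linarith [hs.1])
      intro u hu
      exact hΨs u ⟨hu.1.le, le_trans hu.2.le hs.2⟩
    have h2 := hWnn τ₁ ⟨hτ₀τ₁.le, le_refl _⟩
    have h3 : P/4 ≤ s - τ₁ := by linarith [hs.1]
    nlinarith
  have hfin : Φ (τ₁ + P/4) + (P^2/8) * ((τ₁ + P/2) - (τ₁ + P/4)) ≤ Φ (τ₁ + P/2) := by
    apply growth_ge hΦ (by linarith)
    intro u hu
    exact hWs u ⟨hu.1.le, hu.2.le⟩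
  have hbig : M < Φ (τ₁ + P/2) := by
    have h1 := hpos (τ₁ + P/4)
    have h2 : (31*(1+M))^3 ≤ P^3 := pow_le_pow_left₀ (by nlinarith) hP31 3
    have h3 : P^2/8 * ((τ₁ + P/2) - (τ₁ + P/4)) = P^3/32 := by ring
    have h6 : (1+M) ≤ (1+M)^3 := by nlinarith [sq_nonneg (1+M)]
    have h7 : 29791*(1+M)^3 ≤ P^3 := by
      have h8 : (31*(1+M))^3 = 29791*(1+M)^3 := by ring
      linarith [h8 ▸ h2]
    have h9 : 29791*(1+M) ≤ P^3 := le_trans (by linarith) h7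
    linarith
  exact ⟨τ₁ + P/2, by linarith, hbig⟩


lemma goal1 (hHKall : ∀ K, ∃ T, ∀ τ ≥ T, K ≤ Hfun Φ W Ψ τ)
    (hz : ∀ T : ℝ, ∃ ζ ≥ T, W ζ = 0)
    {M : ℝ} (hM : 1 ≤ M) {T0 : ℝ} (hcap : ∀ τ ≥ T0, Φ τ ≤ M) : False := by
  have hcontW : Continuous W := continuous_iff_continuousAt.2 (fun t => (hW t).continuousAt)
  have h1M : (0:ℝ) < 500*(1+M) := by nlinarith
  set δ := 1/(500*(1+M)) with hδ
  have hδ0 : 0 < δ := by rw [hδ]; exact div_pos one_pos h1M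
  obtain ⟨TK, hHK⟩ := hHKall (M + (2*δ^2)⁻¹)
  have hsmall : ∀ ζ, TK ≤ ζ → T0 ≤ ζ → W ζ = 0 → Φ ζ ≤ δ := by
    intro ζ h1 h2 h3
    have hHc := hHK ζ h1
    rw [Hfun] at hHc
    simp only [h3, zero_mul, zero_add] at hHc
    have h4 := hcap ζ h2
    have h5 : (2*δ^2)⁻¹ ≤ (2*(Φ ζ)^2)⁻¹ := by linarith
    have ha : (0:ℝ) < 2*(Φ ζ)^2 := by nlinarith [pow_pos (hpos ζ) 2]
    have hb : (0:ℝ) < 2*δ^2 := by nlinarith [pow_pos hδ0 2]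
    have h6 : 2*(Φ ζ)^2 ≤ 2*δ^2 := (inv_le_inv₀ hb ha).1 h5
    nlinarith [hpos ζ]
  obtain ⟨ζ, hζ, hWζ⟩ := hz (max TK T0)
  have hζK : TK ≤ ζ := le_trans (le_max_left _ _) hζ
  have hζ0 : T0 ≤ ζ := le_trans (le_max_right _ _) hζ
  have hΦζ : Φ ζ ≤ δ := hsmall ζ hζK hζ0 hWζ
  have hfind : ∃ τ₀, T0 ≤ τ₀ ∧ W τ₀ = 0 ∧ 0 ≤ Ψ τ₀ ∧ Φ τ₀ ≤ δ := by
    rcases le_or_gt 0 (Ψ ζ) with hΨζ | hΨζ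
    · exact ⟨ζ, hζ0, hWζ, hΨζ, hΦζ⟩
    · obtain ⟨s₀, hs₀, hneg⟩ := deriv_neg_after (hW ζ) hWζ hΨζ
      set Z2 := {τ ∈ Ici (ζ + s₀) | W τ = 0} with hZ2
      have hZ2c : IsClosed Z2 := isClosed_Ici.inter (isClosed_singleton.preimage hcontW)
      obtain ⟨ζ2, hζ2, hWζ2⟩ := hz (ζ + s₀)
      have hZ2ne : Z2.Nonempty := ⟨ζ2, hζ2, hWζ2⟩
      have hbdd : BddBelow Z2 := ⟨ζ + s₀, fun x hx => hx.1⟩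
      set z₂ := sInf Z2 with hz₂def
      have hz₂Z : z₂ ∈ Z2 := hZ2c.csInf_mem hZ2ne hbdd
      have hWz₂ : W z₂ = 0 := hz₂Z.2
      have hz₂ge : ζ + s₀ ≤ z₂ := hz₂Z.1
      have hWs0 : W (ζ + s₀) < 0 := hneg s₀ hs₀ le_rfl
      have hz₂gt : ζ + s₀ < z₂ :=
        lt_of_le_of_ne hz₂ge (fun h => by rw [← h] at hWz₂; linarith)
      have hno : ∀ t, ζ + s₀ ≤ t → t < z₂ → W t ≠ 0 := by
        intro t h1 h2 hWt
        have hmem : t ∈ Z2 := ⟨h1, hWt⟩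
        have := csInf_le hbdd hmem
        rw [← hz₂def] at this
        linarith
      have hWneg2 : ∀ t, ζ < t → t < z₂ → W t < 0 := by
        intro t h1 h2
        rcases le_or_gt t (ζ + s₀) with h3 | h3
        · have h5 := hneg (t - ζ) (by linarith) (by linarith)
          have h6 : ζ + (t - ζ) = t := by ring
          rwa [h6] at h5
        · by_contra h4
          push_neg at h4
          rcases eq_or_lt_of_le h4 with h5 | h5
          · exact hno t (by linarith) h2 h5.symm
          · obtain ⟨ξ, hξ, hWξ⟩ := intermediate_value_Icc (by linarith : ζ + s₀ ≤ t)
              hcontW.continuousOn ⟨hWs0.le, h5.le⟩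
            exact hno ξ hξ.1 (lt_of_le_of_lt hξ.2 h2) hWξ
      have hΦz₂ : Φ z₂ ≤ Φ ζ := by
        have h1 : Φ z₂ ≤ Φ ζ + 0 * (z₂ - ζ) :=
          growth_le hΦ (by linarith) (fun u hu => (hWneg2 u hu.1 hu.2).le)
        linarith
      have hΨz₂ : 0 ≤ Ψ z₂ := by
        by_contra h4
        push_neg at h4
        obtain ⟨s₁, hs₁, hpos₁⟩ := deriv_neg_before (hW z₂) hWz₂ h4
        set s := min s₁ ((z₂ - (ζ + s₀))/2) with hs
        have hs0 : 0 < s := lt_min hs₁ (by linarith)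
        have h5 : 0 < W (z₂ - s) := hpos₁ s hs0 (min_le_left _ _)
        have h6 : z₂ - s < z₂ := by linarith
        have h7 : ζ < z₂ - s := by
          have := min_le_right s₁ ((z₂ - (ζ + s₀))/2)
          have : s ≤ (z₂ - (ζ + s₀))/2 := this
          linarith [hs₀]
        exact absurd (hWneg2 (z₂ - s) h7 h6) (by linarith)
      exact ⟨z₂, by linarith, hWz₂, hΨz₂, le_trans hΦz₂ hΦζ⟩
  obtain ⟨τ₀, hτ₀T0, hWτ₀, hΨτ₀, hΦτ₀⟩ := hfind
  obtain ⟨τ, hτ, hMτ⟩ := blowup hpos hΦ hW hΨ hM hWτ₀ hΨτ₀ (by rw [← hδ]; exact hΦτ₀)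
  have := hcap τ (le_trans hτ₀T0 hτ)
  linarith


end Main


/-- If Φ is a global positive solution of Φ''' = Φ⁻³ − 1 that does not
converge to 1 as τ → ∞, then limsup_{τ→∞} Φ = +∞ and liminf_{τ→∞} Φ = 0. -/
theorem stmt7 (Φ W Ψ : ℝ → ℝ)
    (hpos : ∀ τ : ℝ, 0 < Φ τ)
    (hd : ∀ τ : ℝ, HasDerivAt Φ (W τ) τ ∧ HasDerivAt W (Ψ τ) τ ∧
      HasDerivAt Ψ ((Φ τ)⁻¹ ^ 3 - 1) τ)
    (hnot : ¬ Filter.Tendsto Φ Filter.atTop (nhds 1)) :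
    (∀ M : ℝ, ∃ᶠ τ in Filter.atTop, M < Φ τ) ∧
    (∀ ε : ℝ, 0 < ε → ∃ᶠ τ in Filter.atTop, Φ τ < ε) := by
  have hΦ : ∀ τ, HasDerivAt Φ (W τ) τ := fun τ => (hd τ).1
  have hW : ∀ τ, HasDerivAt W (Ψ τ) τ := fun τ => (hd τ).2.1
  have hΨ : ∀ τ, HasDerivAt Ψ ((Φ τ)⁻¹ ^ 3 - 1) τ := fun τ => (hd τ).2.2
  have hHnb : ¬ BddAbove (range (Hfun Φ W Ψ)) :=
    fun hB => Hbdd_false hpos hΦ hW hΨ hnot hB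
  have hHKall : ∀ K, ∃ T, ∀ τ ≥ T, K ≤ Hfun Φ W Ψ τ := by
    intro K
    rw [not_bddAbove_iff] at hHnb
    obtain ⟨y, ⟨T, rfl⟩, hy⟩ := hHnb K
    exact ⟨T, fun τ hτ => le_trans hy.le (Hmono hpos hΦ hW hΨ hτ)⟩
  have hz := zeros_late hpos hΦ hW hΨ hnot
  constructor
  · intro M
    rw [Filter.frequently_atTop]
    intro T
    by_contra hcon
    push_neg at hcon
    apply goal1 hpos hΦ hW hΨ hHKall hz (M := max M 1) (le_max_right _ _) (T0 := T)
    intro τ hτ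
    exact le_trans (hcon τ hτ) (le_max_left _ _)
  · intro ε hε
    rw [Filter.frequently_atTop]
    intro T
    by_contra hcon
    push_neg at hcon
    exact goal2 hpos hΦ hW hΨ hHKall hz hε hcon
end

section
/- If Φ is a global positive solution of Φ''' = Φ^(−3) − 1 with liminf_{τ→∞} Φ(τ) > 2, then Φ''' ≤ −1/2 eventually, which forces Φ to become negative in finite time; hence every global positive solution satisfies liminf_{τ→∞} Φ(τ) ≤ 2. -/
private lemma decay (f g : ℝ → ℝ) (a c : ℝ)
    (hf : ∀ τ, a ≤ τ → HasDerivAt f (g τ) τ) (hg : ∀ τ, a ≤ τ → g τ ≤ -c) :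
    ∀ τ, a ≤ τ → f τ ≤ f a - c * (τ - a) := by
  intro τ hτ
  have hderiv : ∀ t ∈ Set.Ici a, HasDerivAt (fun t => f t + c * t) (g t + c) t := by
    intro t ht
    exact ((hf t ht).add ((hasDerivAt_id t).const_mul c)).congr_deriv (by ring)
  have hanti : AntitoneOn (fun t => f t + c * t) (Set.Ici a) := by
    apply antitoneOn_of_deriv_nonpos (convex_Ici a)
    · exact fun t ht => (hderiv t ht).continuousAt.continuousWithinAt
    · intro t ht
      rw [interior_Ici] at ht
      exact (hderiv t (Set.mem_Ici.mpr ht.le)).differentiableAt.differentiableWithinAt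
    · intro t ht
      rw [interior_Ici] at ht
      rw [(hderiv t (Set.mem_Ici.mpr ht.le)).deriv]
      linarith [hg t ht.le]
  have := hanti Set.self_mem_Ici hτ hτ
  simp only at this
  linarith

private lemma event_neg (f g : ℝ → ℝ) (a c : ℝ) (hc : 0 < c)
    (hf : ∀ τ, a ≤ τ → HasDerivAt f (g τ) τ) (hg : ∀ τ, a ≤ τ → g τ ≤ -c) :
    ∃ b, a ≤ b ∧ ∀ τ, b ≤ τ → f τ ≤ -1 := by
  refine ⟨max a (a + (f a + 1)/c), le_max_left _ _, ?_⟩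
  intro τ hτ
  have h1 : a ≤ τ := le_trans (le_max_left _ _) hτ
  have hde := decay f g a c hf hg τ h1
  have h2 : a + (f a + 1)/c ≤ τ := le_trans (le_max_right _ _) hτ
  have h3 : (f a + 1)/c ≤ τ - a := by linarith
  rw [div_le_iff₀ hc] at h3
  nlinarith

/-- Every global positive solution of Φ''' = Φ⁻³ − 1 on [0,∞) satisfies
liminf_{τ→∞} Φ(τ) ≤ 2 (otherwise Φ''' ≤ −1/2 eventually, forcing Φ to become
negative in finite time). -/
theorem stmt8 (Φ W Ψ : ℝ → ℝ)
    (hpos : ∀ τ, 0 ≤ τ → 0 < Φ τ)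
    (hd : ∀ τ, 0 ≤ τ → HasDerivAt Φ (W τ) τ ∧ HasDerivAt W (Ψ τ) τ ∧
      HasDerivAt Ψ ((Φ τ)⁻¹ ^ 3 - 1) τ) :
    ∀ ε : ℝ, 0 < ε → ∃ᶠ τ in Filter.atTop, Φ τ < 2 + ε := by
  intro ε hε
  by_contra hcon
  rw [Filter.not_frequently] at hcon
  simp only [not_lt] at hcon
  obtain ⟨T, hT⟩ := Filter.eventually_atTop.mp hcon
  set a := max T 0 with ha
  have ha0 : (0:ℝ) ≤ a := le_max_right _ _
  have key : ∀ τ, a ≤ τ → (Φ τ)⁻¹ ^ 3 - 1 ≤ -(1/2) := by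
    intro τ hτ
    have hΦ : 2 + ε ≤ Φ τ := hT τ (le_trans (le_max_left _ _) hτ)
    have h2 : (0:ℝ) < 2 + ε := by linarith
    have hinv : (Φ τ)⁻¹ ≤ (2+ε)⁻¹ := by
      apply inv_anti₀ h2 hΦ
    have hinvpos : 0 ≤ (Φ τ)⁻¹ := inv_nonneg.mpr (by linarith)
    have h12 : (2+ε)⁻¹ ≤ 1/2 := by
      rw [inv_le_comm₀ (by linarith) (by norm_num)]
      norm_num
      linarith
    have : (Φ τ)⁻¹ ^ 3 ≤ (1/2)^3 := by
      apply pow_le_pow_left₀ hinvpos (le_trans hinv h12)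
    norm_num at this ⊢
    linarith
  -- Ψ eventually ≤ -1
  obtain ⟨b, hab, hΨ⟩ := event_neg Ψ (fun τ => (Φ τ)⁻¹ ^ 3 - 1) a (1/2) (by norm_num)
    (fun τ hτ => (hd τ (le_trans ha0 hτ)).2.2) key
  have hb0 : (0:ℝ) ≤ b := le_trans ha0 hab
  -- W eventually ≤ -1
  obtain ⟨d, hbd, hW⟩ := event_neg W Ψ b 1 one_pos
    (fun τ hτ => (hd τ (le_trans hb0 hτ)).2.1) (fun τ hτ => by simpa using hΨ τ hτ)
  have hd0 : (0:ℝ) ≤ d := le_trans hb0 hbd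
  -- Φ eventually ≤ -1
  obtain ⟨e, hde, hΦn⟩ := event_neg Φ W d 1 one_pos
    (fun τ hτ => (hd τ (le_trans hd0 hτ)).1) (fun τ hτ => by simpa using hW τ hτ)
  have he0 : (0:ℝ) ≤ e := le_trans hd0 hde
  have := hpos e he0
  have := hΦn e le_rfl
  linarith
end

section
/- If Φ is a global positive solution of Φ''' = Φ^(−3) − 1 with limsup_{τ→∞} Φ(τ) < 1, then Φ'' tends to +∞, hence Φ' and Φ tend to +∞, a contradiction; therefore every global positive solution satisfies limsup_{τ→∞} Φ(τ) ≥ 1. -/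
open Filter

lemma aux_tendsto_atTop_of_deriv_ge (f g : ℝ → ℝ) (c : ℝ) (hc : 0 < c)
    (h : ∀ᶠ τ in Filter.atTop, HasDerivAt f (g τ) τ ∧ c ≤ g τ) :
    Filter.Tendsto f Filter.atTop Filter.atTop := by
  obtain ⟨T, hT⟩ := Filter.eventually_atTop.1 h
  set F : ℝ → ℝ := fun x => f x - c * x with hF
  have hder : ∀ x, T ≤ x → HasDerivAt F (g x - c) x := by
    intro x hx
    exact (hT x hx).1.sub ((hasDerivAt_id x).const_mul c |>.congr_deriv (by ring))
  have hmono : MonotoneOn F (Set.Ici T) := by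
    apply monotoneOn_of_deriv_nonneg (convex_Ici T)
    · intro x hx
      exact (hder x hx).continuousAt.continuousWithinAt
    · intro x hx
      rw [interior_Ici] at hx
      exact (hder x (le_of_lt hx)).differentiableAt.differentiableWithinAt
    · intro x hx
      rw [interior_Ici] at hx
      rw [(hder x (le_of_lt hx)).deriv]
      have := (hT x (le_of_lt hx)).2
      linarith
  have hlb : ∀ᶠ x in Filter.atTop, c * x + (f T - c * T) ≤ f x := by
    filter_upwards [Filter.eventually_ge_atTop T] with x hx
    have := hmono (Set.self_mem_Ici) hx hx
    simp only [hF] at this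
    linarith
  refine Filter.tendsto_atTop_mono' _ hlb ?_
  exact Filter.tendsto_atTop_add_const_right _ _ (Filter.Tendsto.const_mul_atTop hc tendsto_id)

/-- Every global positive solution of Φ''' = Φ⁻³ − 1 on [0,∞) satisfies
limsup_{τ→∞} Φ(τ) ≥ 1 (otherwise Φ'', hence Φ' and Φ, would tend to +∞,
a contradiction). -/
theorem stmt9 (Φ W Ψ : ℝ → ℝ)
    (hpos : ∀ τ, 0 ≤ τ → 0 < Φ τ)
    (hd : ∀ τ, 0 ≤ τ → HasDerivAt Φ (W τ) τ ∧ HasDerivAt W (Ψ τ) τ ∧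
      HasDerivAt Ψ ((Φ τ)⁻¹ ^ 3 - 1) τ) :
    ∀ ε : ℝ, 0 < ε → ∃ᶠ τ in Filter.atTop, 1 - ε < Φ τ := by
  intro ε hε
  by_contra hcon
  rw [Filter.not_frequently] at hcon
  simp only [not_lt] at hcon
  have hbig : ∀ᶠ τ in Filter.atTop, 0 ≤ τ ∧ Φ τ ≤ 1 - ε :=
    (Filter.eventually_ge_atTop 0).and hcon
  have h1ε : 0 < 1 - ε := by
    obtain ⟨τ, h0, hle⟩ := hbig.exists
    exact lt_of_lt_of_le (hpos τ h0) hle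
  have hδpos : 0 < (1 - ε)⁻¹ ^ 3 - 1 := by
    have h1 : 1 < (1 - ε)⁻¹ := (one_lt_inv₀ h1ε).2 (by linarith)
    nlinarith [sq_nonneg ((1 - ε)⁻¹ - 1), sq_nonneg ((1 - ε)⁻¹ + 1)]
  have hΨ : Filter.Tendsto Ψ Filter.atTop Filter.atTop := by
    apply aux_tendsto_atTop_of_deriv_ge Ψ (fun τ => (Φ τ)⁻¹ ^ 3 - 1) _ hδpos
    filter_upwards [hbig] with τ hτ
    obtain ⟨hτ0, hτle⟩ := hτ
    refine ⟨(hd τ hτ0).2.2, ?_⟩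
    have h1 : (1 - ε)⁻¹ ≤ (Φ τ)⁻¹ := by
      apply inv_anti₀ (hpos τ hτ0) hτle
    have h2 : (0:ℝ) < (1 - ε)⁻¹ := by positivity
    have h3 : (1 - ε)⁻¹ ^ 3 ≤ (Φ τ)⁻¹ ^ 3 := pow_le_pow_left₀ h2.le h1 3
    linarith
  have hW : Filter.Tendsto W Filter.atTop Filter.atTop := by
    apply aux_tendsto_atTop_of_deriv_ge W Ψ 1 one_pos
    filter_upwards [hΨ.eventually_ge_atTop 1, Filter.eventually_ge_atTop (0:ℝ)] with τ h1 h0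
    exact ⟨(hd τ h0).2.1, h1⟩
  have hΦ : Filter.Tendsto Φ Filter.atTop Filter.atTop := by
    apply aux_tendsto_atTop_of_deriv_ge Φ W 1 one_pos
    filter_upwards [hW.eventually_ge_atTop 1, Filter.eventually_ge_atTop (0:ℝ)] with τ h1 h0
    exact ⟨(hd τ h0).1, h1⟩
  obtain ⟨τ, hgt, hle⟩ := ((hΦ.eventually_gt_atTop (1 - ε)).and hcon).exists
  linarith
end

section
/- Suppose Φ is a positive solution of Φ''' = Φ^(−3) − 1 on ℝ with Φ(τ) → 1, Φ'(τ) → 0 and Φ''(τ) → 0 as τ → +∞, and suppose Φ(τ) > 1 for all τ in some interval (τ̄, ∞). Then in fact Φ(τ) > 1 for all τ ∈ ℝ, Φ'(τ) < 0 for all sufficiently negative τ, and Φ(τ) → +∞ as τ → −∞. -/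
open Filter

private lemma neg_of_deriv_pos_tendsto (g g' : ℝ → ℝ) (a : ℝ)
    (hd : ∀ τ, HasDerivAt g (g' τ) τ)
    (hpos : ∀ τ, a < τ → 0 < g' τ)
    (hlim : Tendsto g atTop (nhds 0)) :
    ∀ τ, a < τ → g τ < 0 := by
  have hderiv : ∀ τ, deriv g τ = g' τ := fun τ => (hd τ).deriv
  have hmono : StrictMonoOn g (Set.Ioi a) := by
    apply strictMonoOn_of_deriv_pos (convex_Ioi a)
    · exact fun x _ => ((hd x).differentiableAt.continuousAt).continuousWithinAt
    · intro x hx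
      rw [interior_Ioi] at hx
      rw [hderiv]; exact hpos x hx
  intro τ hτ
  have h1 : g (τ + 1) ≤ 0 := by
    refine ge_of_tendsto hlim ?_
    filter_upwards [eventually_ge_atTop (τ + 1)] with s hs
    rcases eq_or_lt_of_le hs with h | h
    · rw [h]
    · exact le_of_lt (hmono (by simp only [Set.mem_Ioi]; linarith)
        (by simp only [Set.mem_Ioi]; linarith) h)
  have h2 : g τ < g (τ + 1) :=
    hmono (Set.mem_Ioi.mpr hτ) (Set.mem_Ioi.mpr (by linarith)) (by linarith)
  linarith

private lemma pos_of_deriv_neg_tendsto (g g' : ℝ → ℝ) (a : ℝ)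
    (hd : ∀ τ, HasDerivAt g (g' τ) τ)
    (hneg : ∀ τ, a < τ → g' τ < 0)
    (hlim : Tendsto g atTop (nhds 0)) :
    ∀ τ, a < τ → 0 < g τ := by
  have h := neg_of_deriv_pos_tendsto (fun x => -g x) (fun x => -g' x) a
    (fun τ => (hd τ).neg) (fun τ hτ => by simpa using hneg τ hτ)
    (by simpa using hlim.neg)
  intro τ hτ
  have := h τ hτ
  linarith

private lemma key_lemma (Φ W Ψ : ℝ → ℝ) (a : ℝ)
    (hpos : ∀ τ : ℝ, 0 < Φ τ)
    (hd : ∀ τ : ℝ, HasDerivAt Φ (W τ) τ ∧ HasDerivAt W (Ψ τ) τ ∧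
      HasDerivAt Ψ ((Φ τ)⁻¹ ^ 3 - 1) τ)
    (hlimW : Tendsto W atTop (nhds 0))
    (hlimΨ : Tendsto Ψ atTop (nhds 0))
    (hgt : ∀ τ, a < τ → 1 < Φ τ) :
    (∀ τ, a < τ → 0 < Ψ τ) ∧ (∀ τ, a < τ → W τ < 0) := by
  have hΨ : ∀ τ, a < τ → 0 < Ψ τ := by
    apply pos_of_deriv_neg_tendsto Ψ (fun τ => (Φ τ)⁻¹ ^ 3 - 1) a (fun τ => (hd τ).2.2) _ hlimΨ
    intro τ hτ
    have h1 : (Φ τ)⁻¹ < 1 := by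
      rw [inv_lt_one_iff₀]; right; exact hgt τ hτ
    have h0 : (0:ℝ) ≤ (Φ τ)⁻¹ := le_of_lt (inv_pos.mpr (hpos τ))
    nlinarith [pow_lt_one₀ h0 h1 (by norm_num : (3:ℕ) ≠ 0)]
  refine ⟨hΨ, ?_⟩
  exact neg_of_deriv_pos_tendsto W Ψ a (fun τ => (hd τ).2.1) hΨ hlimW

private lemma boundary_gt (Φ W Ψ : ℝ → ℝ) (a : ℝ)
    (hpos : ∀ τ : ℝ, 0 < Φ τ)
    (hd : ∀ τ : ℝ, HasDerivAt Φ (W τ) τ ∧ HasDerivAt W (Ψ τ) τ ∧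
      HasDerivAt Ψ ((Φ τ)⁻¹ ^ 3 - 1) τ)
    (hlimW : Tendsto W atTop (nhds 0))
    (hlimΨ : Tendsto Ψ atTop (nhds 0))
    (hgt : ∀ τ, a < τ → 1 < Φ τ) : 1 < Φ a := by
  obtain ⟨-, hW⟩ := key_lemma Φ W Ψ a hpos hd hlimW hlimΨ hgt
  have hderiv : ∀ τ, deriv Φ τ = W τ := fun τ => ((hd τ).1).deriv
  have hanti : StrictAntiOn Φ (Set.Ici a) := by
    apply strictAntiOn_of_deriv_neg (convex_Ici a)
    · exact fun x _ => (((hd x).1).differentiableAt.continuousAt).continuousWithinAt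
    · intro x hx
      rw [interior_Ici] at hx
      rw [hderiv]; exact hW x hx
  have h1 : Φ (a + 1) < Φ a :=
    hanti Set.self_mem_Ici (by simp only [Set.mem_Ici]; linarith) (by linarith)
  have := hgt (a + 1) (by linarith)
  linarith

/-- If Φ is a positive solution of Φ''' = Φ⁻³ − 1 on ℝ with
(Φ,Φ',Φ'') → (1,0,0) as τ → +∞ and Φ > 1 on some interval (τ̄,∞), then
Φ > 1 on all of ℝ, Φ' < 0 for all sufficiently negative τ, and Φ → +∞ as
τ → −∞. -/
theorem stmt10 (Φ W Ψ : ℝ → ℝ) (τb : ℝ)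
    (hpos : ∀ τ : ℝ, 0 < Φ τ)
    (hd : ∀ τ : ℝ, HasDerivAt Φ (W τ) τ ∧ HasDerivAt W (Ψ τ) τ ∧
      HasDerivAt Ψ ((Φ τ)⁻¹ ^ 3 - 1) τ)
    (hlim : Filter.Tendsto Φ Filter.atTop (nhds 1) ∧
      Filter.Tendsto W Filter.atTop (nhds 0) ∧
      Filter.Tendsto Ψ Filter.atTop (nhds 0))
    (hgt : ∀ τ, τb < τ → 1 < Φ τ) :
    (∀ τ : ℝ, 1 < Φ τ) ∧
    (∃ T : ℝ, ∀ τ, τ < T → W τ < 0) ∧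
    Filter.Tendsto Φ Filter.atBot Filter.atTop := by
  obtain ⟨hlimΦ, hlimW, hlimΨ⟩ := hlim
  set A : Set ℝ := {s | ∀ τ, s < τ → 1 < Φ τ} with hA
  have hAτb : τb ∈ A := hgt
  -- Step 1 : Φ > 1 everywhere, by a continuation argument
  have h1 : ∀ τ : ℝ, 1 < Φ τ := by
    by_cases hbdd : BddBelow A
    · exfalso
      have hne : A.Nonempty := ⟨τb, hAτb⟩
      set a := sInf A with ha
      have hgta : ∀ τ, a < τ → 1 < Φ τ := by
        intro τ hτ
        obtain ⟨s, hsA, hsτ⟩ := exists_lt_of_csInf_lt hne hτ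
        exact hsA τ hsτ
      have hΦa : 1 < Φ a := boundary_gt Φ W Ψ a hpos hd hlimW hlimΨ hgta
      have hcont : ContinuousAt Φ a := ((hd a).1).differentiableAt.continuousAt
      have hev : ∀ᶠ y in nhds a, 1 < Φ y := hcont.eventually (eventually_gt_nhds hΦa)
      obtain ⟨ε, hε, hball⟩ := Metric.eventually_nhds_iff.mp hev
      have hmem : a - ε / 2 ∈ A := by
        intro τ hτ
        rcases lt_or_ge a τ with h | h
        · exact hgta τ h
        · apply hball
          rw [Real.dist_eq, abs_lt]
          constructor <;> linarith
      have := csInf_le hbdd hmem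
      linarith
    · intro τ
      obtain ⟨s, hsA, hsτ⟩ := not_bddBelow_iff.mp hbdd τ
      exact hsA τ hsτ
  -- Step 2 : W < 0 and Ψ > 0 everywhere
  have hW : ∀ τ : ℝ, W τ < 0 := by
    intro τ
    obtain ⟨-, hW'⟩ := key_lemma Φ W Ψ (τ - 1) hpos hd hlimW hlimΨ
      (fun τ' _ => h1 τ')
    exact hW' τ (by linarith)
  have hΨ : ∀ τ : ℝ, 0 < Ψ τ := by
    intro τ
    obtain ⟨hΨ', -⟩ := key_lemma Φ W Ψ (τ - 1) hpos hd hlimW hlimΨ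
      (fun τ' _ => h1 τ')
    exact hΨ' τ (by linarith)
  refine ⟨h1, ⟨0, fun τ _ => hW τ⟩, ?_⟩
  -- Step 3 : Φ → ∞ at −∞ from the linear lower bound Φ τ ≥ Φ 0 + (W 0) τ on τ ≤ 0
  have hWmono : StrictMono W := by
    apply strictMono_of_deriv_pos
    intro x
    rw [((hd x).2.1).deriv]
    exact hΨ x
  set c := W 0 with hc
  have hcneg : c < 0 := hW 0
  have hlb : ∀ τ : ℝ, τ ≤ 0 → Φ 0 + c * τ ≤ Φ τ := by
    have hg : ∀ x : ℝ, HasDerivAt (fun τ => Φ τ - c * τ) (W x - c) x := by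
      intro x
      have hcx : HasDerivAt (fun τ : ℝ => c * τ) c x := by
        simpa using (hasDerivAt_id x).const_mul c
      exact ((hd x).1).sub hcx
    have hanti : AntitoneOn (fun τ => Φ τ - c * τ) (Set.Iic 0) := by
      apply antitoneOn_of_deriv_nonpos (convex_Iic 0)
      · exact fun x _ => (hg x).differentiableAt.continuousAt.continuousWithinAt
      · exact fun x _ => (hg x).differentiableAt.differentiableWithinAt
      · intro x hx
        rw [interior_Iic] at hx
        rw [(hg x).deriv]
        have : W x < W 0 := hWmono hx
        linarith
    intro τ hτ
    have := hanti (Set.mem_Iic.mpr hτ) (Set.mem_Iic.mpr le_rfl) hτ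
    simp only [mul_zero, sub_zero] at this
    linarith
  have hbase : Tendsto (fun τ : ℝ => Φ 0 + c * τ) atBot atTop := by
    apply tendsto_atTop_add_const_left
    have : Tendsto (fun τ : ℝ => -τ) atBot atTop := tendsto_neg_atBot_atTop
    have h2 := this.const_mul_atTop (by linarith : (0:ℝ) < -c)
    refine h2.congr (fun τ => by ring)
  apply tendsto_atTop_mono' _ _ hbase
  filter_upwards [eventually_le_atBot (0:ℝ)] with τ hτ
  exact hlb τ hτ
end

section
/- If Φ is a global positive solution of Φ''' = Φ^(−3) − 1 with lim_{τ→∞} Φ(τ) = 1, then also Φ'(τ) → 0 and Φ''(τ) → 0 as τ → ∞; i.e. the trajectory (Φ, Φ', Φ'') converges to the equilibrium point (1,0,0). -/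
/-- Mean value inequality on a closed interval, with `HasDerivAt` hypotheses. -/
lemma mvt_abs (f f' : ℝ → ℝ) (a b C : ℝ)
    (hf : ∀ x ∈ Set.Icc a b, HasDerivAt f (f' x) x)
    (hC : ∀ x ∈ Set.Icc a b, |f' x| ≤ C) :
    ∀ x ∈ Set.Icc a b, |f x - f a| ≤ C * (x - a) := by
  intro x hx
  have hconv : Convex ℝ (Set.Icc a b) := convex_Icc a b
  have ha : a ∈ Set.Icc a b := ⟨le_refl a, hx.1.trans hx.2⟩
  have h := hconv.norm_image_sub_le_of_norm_hasDerivWithin_le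
    (f := f) (f' := f') (C := C)
    (fun y hy => (hf y hy).hasDerivWithinAt) (fun y hy => hC y hy) ha hx
  have : ‖x - a‖ = x - a := by
    rw [Real.norm_eq_abs, abs_of_nonneg (by linarith [hx.1])]
  simpa [Real.norm_eq_abs, this] using h

/-- If Φ is a global positive solution of Φ''' = Φ⁻³ − 1 on [0,∞) with
Φ(τ) → 1 as τ → ∞, then also Φ'(τ) → 0 and Φ''(τ) → 0, i.e. the trajectory
(Φ,Φ',Φ'') converges to the equilibrium (1,0,0). -/
theorem stmt12 (Φ W Ψ : ℝ → ℝ)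
    (hpos : ∀ τ, 0 ≤ τ → 0 < Φ τ)
    (hd : ∀ τ, 0 ≤ τ → HasDerivAt Φ (W τ) τ ∧ HasDerivAt W (Ψ τ) τ ∧
      HasDerivAt Ψ ((Φ τ)⁻¹ ^ 3 - 1) τ)
    (hlim : Filter.Tendsto Φ Filter.atTop (nhds 1)) :
    Filter.Tendsto W Filter.atTop (nhds 0) ∧
    Filter.Tendsto Ψ Filter.atTop (nhds 0) := by
  -- the third derivative tends to 0
  have hlim3 : Filter.Tendsto (fun τ => (Φ τ)⁻¹ ^ 3 - 1) Filter.atTop (nhds 0) := by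
    have h1 : Filter.Tendsto (fun τ => (Φ τ)⁻¹ ^ 3) Filter.atTop (nhds 1) := by
      have := ((hlim.inv₀ one_ne_zero).pow 3)
      simpa using this
    simpa using h1.sub (tendsto_const_nhds : Filter.Tendsto (fun _ : ℝ => (1:ℝ))
      Filter.atTop (nhds 1))
  have key : ∀ ε : ℝ, 0 < ε → ∃ T : ℝ, ∀ τ ≥ T, |W τ| ≤ 30 * ε ∧ |Ψ τ| ≤ 30 * ε := by
    intro ε hε
    rw [Metric.tendsto_atTop] at hlim3
    obtain ⟨T₁, hT₁⟩ := hlim3 ε hε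
    have hlim' := hlim
    rw [Metric.tendsto_atTop] at hlim'
    obtain ⟨T₂, hT₂⟩ := hlim' ε hε
    refine ⟨max (max T₁ T₂) 0, fun τ hτ => ?_⟩
    have hτ1 : T₁ ≤ τ := le_trans (le_max_left _ _) (le_trans (le_max_left _ _) hτ)
    have hτ2 : T₂ ≤ τ := le_trans (le_max_right _ _) (le_trans (le_max_left _ _) hτ)
    have hτ0 : (0:ℝ) ≤ τ := le_trans (le_max_right _ _) hτ
    have hd3 : ∀ s ≥ τ, |(Φ s)⁻¹ ^ 3 - 1| ≤ ε := by
      intro s hs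
      have := hT₁ s (le_trans hτ1 hs)
      rw [Real.dist_eq, sub_zero] at this
      exact this.le
    have hΦc : ∀ s ≥ τ, |Φ s - 1| ≤ ε := by
      intro s hs
      have := hT₂ s (le_trans hτ2 hs)
      rw [Real.dist_eq] at this
      exact this.le
    have hmem0 : ∀ s ∈ Set.Icc τ (τ + 2), (0:ℝ) ≤ s := fun s hs => le_trans hτ0 hs.1
    -- step 1 : |Ψ s - Ψ τ| ≤ 2 ε on [τ, τ+2]
    have step1 : ∀ s ∈ Set.Icc τ (τ + 2), |Ψ s - Ψ τ| ≤ 2 * ε := by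
      intro s hs
      have h := mvt_abs Ψ (fun s => (Φ s)⁻¹ ^ 3 - 1) τ (τ + 2) ε
        (fun x hx => (hd x (hmem0 x hx)).2.2)
        (fun x hx => hd3 x hx.1) s hs
      have : ε * (s - τ) ≤ 2 * ε := by nlinarith [hs.1, hs.2]
      linarith
    -- step 2 : |W s - W τ - (s - τ) * Ψ τ| ≤ 4 ε on [τ, τ+2]
    have step2 : ∀ s ∈ Set.Icc τ (τ + 2),
        |W s - W τ - (s - τ) * Ψ τ| ≤ 4 * ε := by
      intro s hs
      have hder : ∀ x ∈ Set.Icc τ (τ + 2),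
          HasDerivAt (fun s => W s - W τ - (s - τ) * Ψ τ) (Ψ x - Ψ τ) x := by
        intro x hx
        have h1 : HasDerivAt (fun s => (s - τ) * Ψ τ) (Ψ τ) x := by
          have := ((hasDerivAt_id x).sub_const τ).mul_const (Ψ τ)
          simpa using this
        have := ((hd x (hmem0 x hx)).2.1.sub_const (W τ)).sub h1
        exact this
      have h := mvt_abs _ (fun x => Ψ x - Ψ τ) τ (τ + 2) (2 * ε)
        hder (fun x hx => step1 x hx) s hs
      have h' : |W s - W τ - (s - τ) * Ψ τ| ≤ 2 * ε * (s - τ) := by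
        have e : W s - W τ - (s - τ) * Ψ τ =
            (W s - W τ - (s - τ) * Ψ τ) - (W τ - W τ - (τ - τ) * Ψ τ) := by ring
        rw [e]; exact h
      have : 2 * ε * (s - τ) ≤ 4 * ε := by nlinarith [hs.1, hs.2]
      linarith
    -- step 3 : |Φ s - Φ τ - (s - τ) * W τ - (s - τ)^2 / 2 * Ψ τ| ≤ 8 ε on [τ, τ+2]
    have step3 : ∀ s ∈ Set.Icc τ (τ + 2),
        |Φ s - Φ τ - (s - τ) * W τ - (s - τ) ^ 2 / 2 * Ψ τ| ≤ 8 * ε := by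
      intro s hs
      have hder : ∀ x ∈ Set.Icc τ (τ + 2),
          HasDerivAt (fun s => Φ s - Φ τ - (s - τ) * W τ - (s - τ) ^ 2 / 2 * Ψ τ)
            (W x - W τ - (x - τ) * Ψ τ) x := by
        intro x hx
        have h1 : HasDerivAt (fun s => (s - τ) * W τ) (W τ) x := by
          have := ((hasDerivAt_id x).sub_const τ).mul_const (W τ)
          simpa using this
        have h2 : HasDerivAt (fun s => (s - τ) ^ 2 / 2 * Ψ τ) ((x - τ) * Ψ τ) x := by
          have h0 := (((hasDerivAt_id x).sub_const τ).pow 2).mul_const (Ψ τ / 2)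
          have e1 : (fun s => (s - τ) ^ 2 / 2 * Ψ τ) =
              fun y => ((fun x => id x - τ) ^ 2) y * (Ψ τ / 2) := by
            funext s; simp only [id_eq, Pi.pow_apply]; ring
          rw [e1]
          exact h0.congr_deriv (by simp only [id_eq, Nat.cast_ofNat]; ring)
        have := (((hd x (hmem0 x hx)).1.sub_const (Φ τ)).sub h1).sub h2
        exact this
      have h := mvt_abs _ (fun x => W x - W τ - (x - τ) * Ψ τ) τ (τ + 2) (4 * ε)
        hder (fun x hx => step2 x hx) s hs
      have h' : |Φ s - Φ τ - (s - τ) * W τ - (s - τ) ^ 2 / 2 * Ψ τ| ≤ 4 * ε * (s - τ) := by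
        have e : Φ s - Φ τ - (s - τ) * W τ - (s - τ) ^ 2 / 2 * Ψ τ =
            (Φ s - Φ τ - (s - τ) * W τ - (s - τ) ^ 2 / 2 * Ψ τ) -
            (Φ τ - Φ τ - (τ - τ) * W τ - (τ - τ) ^ 2 / 2 * Ψ τ) := by ring
        rw [e]; exact h
      have : 4 * ε * (s - τ) ≤ 8 * ε := by nlinarith [hs.1, hs.2]
      linarith
    -- evaluate at τ+1 and τ+2
    have h1 := step3 (τ + 1) ⟨by linarith, by linarith⟩
    have h2 := step3 (τ + 2) ⟨by linarith, le_refl _⟩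
    rw [show τ + 1 - τ = (1:ℝ) by ring] at h1
    rw [show τ + 2 - τ = (2:ℝ) by ring] at h2
    norm_num at h1 h2
    have e0 := hΦc τ (le_refl τ)
    have e1 := hΦc (τ + 1) (by linarith)
    have e2 := hΦc (τ + 2) (by linarith)
    rw [abs_le] at h1 h2 e0 e1 e2
    constructor
    · rw [abs_le]; constructor <;> linarith
    · rw [abs_le]; constructor <;> linarith
  constructor <;>
  · rw [Metric.tendsto_atTop]
    intro ε hε
    obtain ⟨T, hT⟩ := key (ε / 31) (by linarith)
    refine ⟨T, fun τ hτ => ?_⟩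
    rw [Real.dist_eq, sub_zero]
    have := hT τ hτ
    first
      | exact lt_of_le_of_lt this.1 (by linarith)
      | exact lt_of_le_of_lt this.2 (by linarith)
end

section
/- The planar system du/dz = v + u²/3, dv/dz = 1 + (5/3)uv has no periodic orbits. -/
open Filter Set Topology

/-- If `f` solves an ODE whose right-hand side is strictly positive on the zero set of `f`,
and `f` is `T`-periodic with `T > 0`, then `f` never vanishes. -/
lemma no_return (f g : ℝ → ℝ) (hf : ∀ z, HasDerivAt f (g z) z)
    (hg : ∀ z, f z = 0 → 0 < g z) (T : ℝ) (hT : 0 < T)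
    (hper : ∀ z, f (z + T) = f z) (z0 : ℝ) (hz0 : f z0 = 0) : False := by
  have hcont : Continuous f := by
    have : Differentiable ℝ f := fun z => (hf z).differentiableAt
    exact this.continuous
  have hc : 0 < g z0 := hg z0 hz0
  have hslope := hasDerivAt_iff_tendsto_slope.1 (hf z0)
  have h1 : {z | 0 < slope f z0 z} ∈ 𝓝[≠] z0 := hslope (Ioi_mem_nhds hc)
  have h1' : {z | 0 < slope f z0 z} ∈ 𝓝[>] z0 :=
    nhdsWithin_mono _ (fun z hz => (Set.mem_Ioi.mp hz).ne') h1
  have h2 : Ioo z0 (z0 + T) ∈ 𝓝[>] z0 :=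
    Ioo_mem_nhdsGT_of_mem ⟨le_refl z0, by linarith⟩
  obtain ⟨a, ha2, ha1⟩ := Filter.nonempty_of_mem (Filter.inter_mem h1' h2)
  have hfa : 0 < f a := by
    have hs : slope f z0 a = f a / (a - z0) := by
      rw [slope_def_field, hz0, sub_zero]
    rw [Set.mem_setOf_eq, hs] at ha2
    rcases div_pos_iff.mp ha2 with ⟨h, _⟩ | ⟨_, h⟩
    · exact h
    · have := ha1.1; linarith
  set S : Set ℝ := {z ∈ Icc a (z0 + T) | f z = 0} with hS
  have hSne : (z0 + T) ∈ S := ⟨⟨ha1.2.le, le_refl _⟩, by rw [hper z0]; exact hz0⟩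
  have hSclosed : IsClosed S :=
    isClosed_Icc.inter (isClosed_eq hcont continuous_const)
  have hbdd : BddBelow S := ⟨a, fun x hx => hx.1.1⟩
  have hsmem : sInf S ∈ S := hSclosed.csInf_mem ⟨_, hSne⟩ hbdd
  set s := sInf S with hs_def
  have has : a ≤ s := hsmem.1.1
  have hfs : f s = 0 := hsmem.2
  have halt : a < s := by
    rcases lt_or_eq_of_le has with h | h
    · exact h
    · exfalso; rw [← h] at hfs; rw [hfs] at hfa; exact lt_irrefl 0 hfa
  have hpos_on : ∀ z ∈ Ico a s, 0 < f z := by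
    intro z hz
    by_contra hle0
    push_neg at hle0
    have hzS : f z ≠ 0 := by
      intro h0
      have : z ∈ S := ⟨⟨hz.1, le_trans hz.2.le hsmem.1.2⟩, h0⟩
      exact absurd (csInf_le hbdd this) (not_le.2 hz.2)
    have hlt : f z < 0 := lt_of_le_of_ne hle0 hzS
    have hsub := intermediate_value_uIcc (a := a) (b := z) hcont.continuousOn
    have h0m : (0 : ℝ) ∈ uIcc (f a) (f z) := by
      rw [mem_uIcc]; right; exact ⟨hlt.le, hfa.le⟩
    obtain ⟨c, hc, hc0⟩ := hsub h0m
    rw [uIcc_of_le hz.1] at hc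
    have hcS : c ∈ S := ⟨⟨hc.1, le_trans (le_trans hc.2 hz.2.le) hsmem.1.2⟩, hc0⟩
    have : s ≤ c := csInf_le hbdd hcS
    have : c < s := lt_of_le_of_lt hc.2 hz.2
    linarith
  -- derivative at s is positive, but left slopes are negative
  have hgs : 0 < g s := hg s hfs
  have hslope_s := hasDerivAt_iff_tendsto_slope.1 (hf s)
  have h3 : {z | 0 < slope f s z} ∈ 𝓝[≠] s := hslope_s (Ioi_mem_nhds hgs)
  have h3' : {z | 0 < slope f s z} ∈ 𝓝[<] s :=
    nhdsWithin_mono _ (fun z hz => (Set.mem_Iio.mp hz).ne) h3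
  have h4 : Ioo a s ∈ 𝓝[<] s := Ioo_mem_nhdsLT_of_mem ⟨halt, le_refl s⟩
  obtain ⟨z, hz2, hz1⟩ := Filter.nonempty_of_mem (Filter.inter_mem h3' h4)
  have hfz : 0 < f z := hpos_on z ⟨hz1.1.le, hz1.2⟩
  have : slope f s z < 0 := by
    rw [slope_def_field, hfs, sub_zero]
    exact div_neg_of_pos_of_neg hfz (by linarith [hz1.2])
  have := hz2
  rw [Set.mem_setOf_eq] at this
  linarith

set_option maxHeartbeats 1000000

/-- The planar system du/dz = v + u²/3, dv/dz = 1 + (5/3)uv has no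
(nonconstant) periodic orbits. -/
theorem stmt18 :
    ¬ ∃ (u v : ℝ → ℝ) (T : ℝ), 0 < T ∧
      (∀ z : ℝ, HasDerivAt u (v z + (u z) ^ 2 / 3) z ∧
        HasDerivAt v (1 + 5 / 3 * u z * v z) z) ∧
      (∀ z : ℝ, u (z + T) = u z ∧ v (z + T) = v z) ∧
      (∃ z₁ z₂ : ℝ, u z₁ ≠ u z₂ ∨ v z₁ ≠ v z₂) := by
  rintro ⟨u, v, T, hT, hode, hper, z₁, z₂, hne⟩
  have hucont : Continuous u := by
    have : Differentiable ℝ u := fun z => (hode z).1.differentiableAt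
    exact this.continuous
  have hvcont : Continuous v := by
    have : Differentiable ℝ v := fun z => (hode z).2.differentiableAt
    exact this.continuous
  -- v never vanishes
  have hvne : ∀ z, v z ≠ 0 := by
    intro z hz
    exact no_return v (fun t => 1 + 5 / 3 * u t * v t) (fun t => (hode t).2)
      (fun t h0 => by show (0:ℝ) < 1 + 5 / 3 * u t * v t; rw [h0]; norm_num) T hT (fun t => (hper t).2) z hz
  -- v is everywhere negative
  have hvneg : ∀ z, v z < 0 := by
    by_contra hcon
    push_neg at hcon
    obtain ⟨z₀, hz₀⟩ := hcon
    have hz₀' : 0 < v z₀ := lt_of_le_of_ne hz₀ (Ne.symm (hvne z₀))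
    have hvall : ∀ z, 0 < v z := by
      intro z
      rcases lt_or_gt_of_ne (hvne z) with h | h
      · exfalso
        obtain ⟨c, _, hc⟩ := intermediate_value_uIcc (a := z) (b := z₀)
          hvcont.continuousOn (by rw [mem_uIcc]; left; exact ⟨h.le, hz₀'.le⟩)
        exact hvne c hc
      · exact h
    have hmono : StrictMono u := by
      apply strictMono_of_deriv_pos
      intro x
      rw [(hode x).1.deriv]
      nlinarith [hvall x, sq_nonneg (u x)]
    have h1 : u 0 < u (0 + T) := hmono (by linarith)
    rw [(hper 0).1] at h1
    exact lt_irrefl _ h1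
  -- u never vanishes
  have hune : ∀ z, u z ≠ 0 := by
    intro z hz
    apply no_return (fun t => -(u t)) (fun t => -(v t + (u t) ^ 2 / 3))
      (fun t => (hode t).1.neg)
      (fun t h0 => by
        have h0' : u t = 0 := by simpa using h0
        show (0:ℝ) < -(v t + u t ^ 2 / 3)
        rw [h0']
        nlinarith [hvneg t])
      T hT (fun t => by simp [(hper t).1]) z (by simp [hz])
  -- u is everywhere positive
  have hupos : ∀ z, 0 < u z := by
    by_contra hcon
    push_neg at hcon
    obtain ⟨z₀, hz₀⟩ := hcon
    have hz₀' : u z₀ < 0 := lt_of_le_of_ne hz₀ (hune z₀)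
    have huall : ∀ z, u z < 0 := by
      intro z
      rcases lt_or_gt_of_ne (hune z) with h | h
      · exact h
      · exfalso
        obtain ⟨c, _, hc⟩ := intermediate_value_uIcc (a := z₀) (b := z)
          hucont.continuousOn (by rw [mem_uIcc]; left; exact ⟨hz₀'.le, h.le⟩)
        exact hune c hc
    have hmono : StrictMono v := by
      apply strictMono_of_deriv_pos
      intro x
      rw [(hode x).2.deriv]
      nlinarith [huall x, hvneg x]
    have h1 : v 0 < v (0 + T) := hmono (by linarith)
    rw [(hper 0).2] at h1
    exact lt_irrefl _ h1
  -- the equilibrium abscissa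
  set e : ℝ := (9 / 5 : ℝ) ^ ((1 : ℝ) / 3) with he_def
  have hepos : 0 < e := Real.rpow_pos_of_pos (by norm_num) _
  have he3 : e ^ 3 = 9 / 5 := by
    rw [he_def, ← Real.rpow_natCast ((9 / 5 : ℝ) ^ ((1 : ℝ) / 3)) 3,
      ← Real.rpow_mul (by norm_num : (0:ℝ) ≤ 9 / 5)]
    norm_num
  -- Lyapunov function and its derivative
  set W : ℝ → ℝ := fun z => 2 * e ^ 2 * (u z - e) * (v z + (u z) ^ 2 / 3)
      + 9 / 5 * (v z + e ^ 2 / 3) * (1 + 5 / 3 * u z * v z) with hW_def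
  set Φ : ℝ → ℝ := fun t => e ^ 2 * (u t - e) ^ 2 + 9 / 10 * (v t + e ^ 2 / 3) ^ 2
    with hΦ_def
  have hΦd : ∀ z, HasDerivAt Φ (W z) z := by
    intro z
    have h1 : HasDerivAt (fun t => u t - e) (v z + (u z) ^ 2 / 3) z :=
      (hode z).1.sub_const e
    have h2 := h1.fun_pow 2
    have h3 : HasDerivAt (fun t => v t + e ^ 2 / 3) (1 + 5 / 3 * u z * v z) z :=
      (hode z).2.add_const _
    have h4 := h3.fun_pow 2
    have h5 := (h2.const_mul (e ^ 2)).add (h4.const_mul (9 / 10 : ℝ))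
    refine h5.congr_deriv ?_
    push_cast
    ring
  -- the key algebraic identity (SOS certificate), using e³ = 9/5
  have hkey : ∀ y w : ℝ,
      2 * e ^ 2 * (y - e) * (w + y ^ 2 / 3) + 9 / 5 * (w + e ^ 2 / 3) * (1 + 5 / 3 * y * w)
      = 3 / 5 * (y - e) ^ 2
        + y * (2 / 3 * (e * (y - e) + 3 / 4 * (w + e ^ 2 / 3)) ^ 2
            + 21 / 8 * (w + e ^ 2 / 3) ^ 2)
        + (-w) * (e * (y - e) ^ 2) := by
    intro y w
    linear_combination (1 / 3 * y ^ 2 - 2 / 3 * y * e - w) * he3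
  have hWnn : ∀ z, 0 ≤ W z := by
    intro z
    show 0 ≤ 2 * e ^ 2 * (u z - e) * (v z + (u z) ^ 2 / 3)
      + 9 / 5 * (v z + e ^ 2 / 3) * (1 + 5 / 3 * u z * v z)
    rw [hkey (u z) (v z)]
    have t1 : 0 ≤ 3 / 5 * (u z - e) ^ 2 := by positivity
    have t2 : 0 ≤ u z * (2 / 3 * (e * (u z - e) + 3 / 4 * (v z + e ^ 2 / 3)) ^ 2
        + 21 / 8 * (v z + e ^ 2 / 3) ^ 2) :=
      mul_nonneg (hupos z).le (by positivity)
    have t3 : 0 ≤ (-(v z)) * (e * (u z - e) ^ 2) :=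
      mul_nonneg (by linarith [hvneg z]) (by positivity)
    linarith
  have hmonoΦ : Monotone Φ :=
    monotone_of_deriv_nonneg (fun z => (hΦd z).differentiableAt)
      (fun z => by rw [(hΦd z).deriv]; exact hWnn z)
  have hΦper : ∀ z, Φ (z + T) = Φ z := by
    intro z
    rw [hΦ_def]
    simp only [(hper z).1, (hper z).2]
  have hΦn : ∀ (n : ℕ) (z : ℝ), Φ (z + n * T) = Φ z := by
    intro n
    induction n with
    | zero => intro z; norm_num
    | succ n ih =>
      intro z
      have harg : z + ((n : ℝ) + 1) * T = (z + n * T) + T := by ring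
      push_cast
      rw [harg, hΦper, ih]
  have hconst : ∀ z z', z ≤ z' → Φ z = Φ z' := by
    intro z z' hzz
    obtain ⟨n, hn⟩ := exists_nat_ge ((z' - z) / T)
    have hn' : z' ≤ z + n * T := by
      have := (div_le_iff₀ hT).mp hn
      linarith
    exact le_antisymm (hmonoΦ hzz) (by calc Φ z' ≤ Φ (z + n * T) := hmonoΦ hn'
                                         _ = Φ z := hΦn n z)
  have hΦconst : Φ = fun _ => Φ 0 := by
    funext z
    rcases le_total z 0 with h | h
    · exact hconst z 0 h
    · exact (hconst 0 z h).symm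
  have hW0 : ∀ z, W z = 0 := by
    intro z
    have h1 : HasDerivAt Φ 0 z := by
      rw [hΦconst]
      simpa using hasDerivAt_const z (Φ 0)
    exact (hΦd z).unique h1
  -- conclude the orbit sits at the equilibrium
  have hfix : ∀ z, u z = e ∧ v z = -(e ^ 2) / 3 := by
    intro z
    have h0 := hW0 z
    have h0' : 2 * e ^ 2 * (u z - e) * (v z + (u z) ^ 2 / 3)
        + 9 / 5 * (v z + e ^ 2 / 3) * (1 + 5 / 3 * u z * v z) = 0 := h0
    rw [hkey (u z) (v z)] at h0'
    have t1 : 0 ≤ 3 / 5 * (u z - e) ^ 2 := by positivity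
    have hB : 0 ≤ 2 / 3 * (e * (u z - e) + 3 / 4 * (v z + e ^ 2 / 3)) ^ 2
        + 21 / 8 * (v z + e ^ 2 / 3) ^ 2 := by positivity
    have t2 : 0 ≤ u z * (2 / 3 * (e * (u z - e) + 3 / 4 * (v z + e ^ 2 / 3)) ^ 2
        + 21 / 8 * (v z + e ^ 2 / 3) ^ 2) := mul_nonneg (hupos z).le hB
    have t3 : 0 ≤ (-(v z)) * (e * (u z - e) ^ 2) :=
      mul_nonneg (by linarith [hvneg z]) (by positivity)
    have e1 : (u z - e) ^ 2 = 0 := by linarith [sq_nonneg (u z - e)]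
    have hu_e : u z = e := by
      have := sq_eq_zero_iff.mp e1
      linarith
    refine ⟨hu_e, ?_⟩
    have t1e : 3 / 5 * (u z - e) ^ 2 = 0 := by rw [e1]; ring
    have t3e : (-(v z)) * (e * (u z - e) ^ 2) = 0 := by rw [e1]; ring
    have e2 : u z * (2 / 3 * (e * (u z - e) + 3 / 4 * (v z + e ^ 2 / 3)) ^ 2
        + 21 / 8 * (v z + e ^ 2 / 3) ^ 2) = 0 := by linarith
    have hBz : 2 / 3 * (e * (u z - e) + 3 / 4 * (v z + e ^ 2 / 3)) ^ 2
        + 21 / 8 * (v z + e ^ 2 / 3) ^ 2 = 0 := by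
      rcases mul_eq_zero.mp e2 with h | h
      · exact absurd h (ne_of_gt (hupos z))
      · exact h
    have e3 : (v z + e ^ 2 / 3) ^ 2 = 0 := by
      linarith [sq_nonneg (e * (u z - e) + 3 / 4 * (v z + e ^ 2 / 3)),
        sq_nonneg (v z + e ^ 2 / 3)]
    have := sq_eq_zero_iff.mp e3
    linarith
  rcases hne with h | h
  · exact h (by rw [(hfix z₁).1, (hfix z₂).1])
  · exact h (by rw [(hfix z₁).2, (hfix z₂).2])
end

section
/- If an orbit (u(z), v(z)) of the planar system du/dz = v + u²/3, dv/dz = 1 + (5/3)uv satisfies the asymptotics v(u) = u²/2 + O(u^(4/5)) as u → +∞, and φ is recovered via dφ/dz = uφ, then the corresponding solution φ(ζ) of φ''' = φ^(−3) satisfies φ(ζ) ~ Γζ² as ζ → +∞ for some constant Γ > 0. -/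
open Real Filter Set

lemma aux_mono {f g : ℝ → ℝ} {Z : ℝ} (hd : ∀ x, Z ≤ x → HasDerivAt f (g x) x)
    (h0 : ∀ x, Z ≤ x → 0 ≤ g x) : MonotoneOn f (Set.Ici Z) := by
  apply monotoneOn_of_deriv_nonneg (convex_Ici Z)
  · intro x hx; exact (hd x hx).continuousAt.continuousWithinAt
  · intro x hx
    rw [interior_Ici] at hx
    exact ((hd x hx.le).differentiableAt).differentiableWithinAt
  · intro x hx
    rw [interior_Ici] at hx
    rw [(hd x hx.le).deriv]
    exact h0 x hx.le

lemma aux_anti {f g : ℝ → ℝ} {Z : ℝ} (hd : ∀ x, Z ≤ x → HasDerivAt f (g x) x)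
    (h0 : ∀ x, Z ≤ x → g x ≤ 0) : AntitoneOn f (Set.Ici Z) := by
  intro a ha b hb hab
  have := aux_mono (f := fun x => - f x) (g := fun x => - g x)
    (fun x hx => (hd x hx).neg) (fun x hx => neg_nonneg.2 (h0 x hx)) ha hb hab
  simpa using this

set_option maxHeartbeats 1000000 in
/-- If along the orbit of a positive solution φ of φ''' = φ⁻³ (transformed via
u = φ^(1/3)φ', v = φ^(5/3)φ'') one has u → +∞ and v = u²/2 + O(u^(4/5)) as
u → +∞, then φ(ζ) ~ Γζ² as ζ → +∞ for some Γ > 0. -/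
theorem stmt19 (φ φ' φ'' u v : ℝ → ℝ)
    (hpos : ∀ ζ : ℝ, 0 < φ ζ)
    (hd1 : ∀ ζ : ℝ, HasDerivAt φ (φ' ζ) ζ)
    (hd2 : ∀ ζ : ℝ, HasDerivAt φ' (φ'' ζ) ζ)
    (hd3 : ∀ ζ : ℝ, HasDerivAt φ'' ((φ ζ)⁻¹ ^ 3) ζ)
    (hu : ∀ ζ : ℝ, u ζ = (φ ζ) ^ ((1 : ℝ) / 3) * φ' ζ)
    (hv : ∀ ζ : ℝ, v ζ = (φ ζ) ^ ((5 : ℝ) / 3) * φ'' ζ)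
    (hutop : Filter.Tendsto u Filter.atTop Filter.atTop)
    (hasym : ∃ C U : ℝ, 0 < C ∧ 0 < U ∧ ∀ ζ : ℝ, U ≤ u ζ →
      |v ζ - (u ζ) ^ 2 / 2| ≤ C * (u ζ) ^ ((4 : ℝ) / 5)) :
    ∃ Γ : ℝ, 0 < Γ ∧
      Filter.Tendsto (fun ζ => φ ζ / ζ ^ 2) Filter.atTop (nhds Γ) := by
  obtain ⟨C, U, hC, hU, hCU⟩ := hasym
  -- Step A : threshold Z₀ beyond which u ≥ max U 1
  obtain ⟨Z₀', hZ₀'⟩ := eventually_atTop.1 (hutop.eventually_ge_atTop (max U 1))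
  set Z₀ : ℝ := max Z₀' 1 with hZ₀_def
  have hZ₀1 : (1:ℝ) ≤ Z₀ := le_max_right _ _
  have hZ₀ : ∀ ζ, Z₀ ≤ ζ → max U 1 ≤ u ζ := fun ζ hζ => hZ₀' ζ ((le_max_left _ _).trans hζ)
  have hupos : ∀ ζ, Z₀ ≤ ζ → (1:ℝ) ≤ u ζ := fun ζ hζ => (le_max_right U 1).trans (hZ₀ ζ hζ)
  have hφ'pos : ∀ ζ, Z₀ ≤ ζ → 0 < φ' ζ := by
    intro ζ hζ
    have h1 : (0:ℝ) < u ζ := lt_of_lt_of_le one_pos (hupos ζ hζ)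
    rw [hu] at h1
    have hx : (0:ℝ) < (φ ζ) ^ ((1:ℝ)/3) := rpow_pos_of_pos (hpos ζ) _
    nlinarith
  -- w and its derivative
  set w : ℝ → ℝ := fun ζ => φ' ζ * (φ ζ) ^ (-((1:ℝ)/2)) with hw_def
  set wd : ℝ → ℝ := fun ζ => (φ ζ * φ'' ζ - (φ' ζ)^2/2) * (φ ζ) ^ (-((3:ℝ)/2)) with hwd_def
  have hwpos : ∀ ζ, Z₀ ≤ ζ → 0 < w ζ := fun ζ hζ =>
    mul_pos (hφ'pos ζ hζ) (rpow_pos_of_pos (hpos ζ) _)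
  have hdw : ∀ ζ, HasDerivAt w (wd ζ) ζ := by
    intro ζ
    have h := (hd2 ζ).mul ((hd1 ζ).rpow_const (p := -((1:ℝ)/2)) (Or.inl (hpos ζ).ne'))
    refine h.congr_deriv ?_
    have e1 : (φ ζ) ^ (-((1:ℝ)/2) - 1) = (φ ζ) ^ (-((3:ℝ)/2)) := by norm_num
    have e2 : (φ ζ) ^ (-((1:ℝ)/2)) = φ ζ * (φ ζ) ^ (-((3:ℝ)/2)) := by
      rw [show (-((1:ℝ)/2)) = 1 + (-((3:ℝ)/2)) by norm_num, Real.rpow_add (hpos ζ),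
        Real.rpow_one]
    simp only [hwd_def, e1, e2]
    ring
  -- key estimate
  have hkey : ∀ ζ, Z₀ ≤ ζ → |φ ζ * φ'' ζ - (φ' ζ)^2/2| ≤ C * (w ζ) ^ ((4:ℝ)/5) := by
    intro ζ hζ
    have hx : (0:ℝ) < φ ζ := hpos ζ
    have hy : (0:ℝ) < φ' ζ := hφ'pos ζ hζ
    have h := hCU ζ ((le_max_left U 1).trans (hZ₀ ζ hζ))
    rw [hu, hv] at h
    have h1 : (φ ζ) ^ ((5:ℝ)/3) * φ'' ζ - ((φ ζ) ^ ((1:ℝ)/3) * φ' ζ)^2/2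
        = (φ ζ) ^ ((2:ℝ)/3) * (φ ζ * φ'' ζ - (φ' ζ)^2/2) := by
      rw [mul_pow, ← Real.rpow_natCast ((φ ζ) ^ ((1:ℝ)/3)) 2, ← Real.rpow_mul hx.le,
        show ((1:ℝ)/3 * (2:ℕ) : ℝ) = 2/3 by norm_num,
        show ((5:ℝ)/3) = 2/3 + 1 by norm_num, Real.rpow_add hx, Real.rpow_one]
      ring
    have h2 : ((φ ζ) ^ ((1:ℝ)/3) * φ' ζ) ^ ((4:ℝ)/5)
        = (φ ζ) ^ ((4:ℝ)/15) * (φ' ζ) ^ ((4:ℝ)/5) := by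
      rw [Real.mul_rpow (rpow_pos_of_pos hx _).le hy.le, ← Real.rpow_mul hx.le]
      norm_num
    have h3 : (w ζ) ^ ((4:ℝ)/5) = (φ' ζ) ^ ((4:ℝ)/5) * (φ ζ) ^ (-((2:ℝ)/5)) := by
      simp only [hw_def]
      rw [Real.mul_rpow hy.le (rpow_pos_of_pos hx _).le, ← Real.rpow_mul hx.le]
      norm_num
    rw [h1, h2] at h
    rw [abs_mul, abs_of_pos (rpow_pos_of_pos hx ((2:ℝ)/3))] at h
    have h4 : (φ ζ) ^ ((4:ℝ)/15) = (φ ζ) ^ (-((2:ℝ)/5)) * (φ ζ) ^ ((2:ℝ)/3) := by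
      rw [← Real.rpow_add hx]; norm_num
    rw [h3]
    have hx23 : (0:ℝ) < (φ ζ) ^ ((2:ℝ)/3) := rpow_pos_of_pos hx _
    rw [h4] at h
    have h5 : |φ ζ * φ'' ζ - (φ' ζ)^2/2|
        ≤ C * ((φ ζ) ^ (-((2:ℝ)/5)) * (φ ζ) ^ ((2:ℝ)/3) * (φ' ζ) ^ ((4:ℝ)/5)) / (φ ζ) ^ ((2:ℝ)/3) :=
      (le_div_iff₀ hx23).2 (by linarith)
    calc |φ ζ * φ'' ζ - (φ' ζ)^2/2|
        ≤ C * ((φ ζ) ^ (-((2:ℝ)/5)) * (φ ζ) ^ ((2:ℝ)/3) * (φ' ζ) ^ ((4:ℝ)/5)) / (φ ζ) ^ ((2:ℝ)/3) := h5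
      _ = C * ((φ' ζ) ^ ((4:ℝ)/5) * (φ ζ) ^ (-((2:ℝ)/5))) := by
          field_simp
  -- growth of φ
  have hgrow : ∀ M : ℝ, 0 < M → ∃ Z, Z₀ ≤ Z ∧ ∀ ζ, Z ≤ ζ → M * (ζ - Z) ≤ (φ ζ) ^ ((4:ℝ)/3) := by
    intro M hM
    obtain ⟨Z', hZ'⟩ := eventually_atTop.1 (hutop.eventually_ge_atTop (3*M/4))
    refine ⟨max Z' Z₀, le_max_right _ _, ?_⟩
    intro ζ hζ
    have hmono := aux_mono (Z := max Z' Z₀) (f := fun t => (φ t)^((4:ℝ)/3) - M*t)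
      (g := fun t => φ' t * ((4:ℝ)/3) * (φ t)^((4:ℝ)/3 - 1) - M)
      (fun t ht => ((hd1 t).rpow_const (Or.inl (hpos t).ne')).sub
        (by simpa using (hasDerivAt_id t).const_mul M))
      (fun t ht => by
        have h1 : 3*M/4 ≤ u t := hZ' t ((le_max_left _ _).trans ht)
        rw [hu] at h1
        have he : (φ t)^((4:ℝ)/3 - 1) = (φ t)^((1:ℝ)/3) := by norm_num
        show 0 ≤ φ' t * ((4:ℝ)/3) * (φ t)^((4:ℝ)/3 - 1) - M
        rw [he]
        nlinarith)
    have := hmono (self_mem_Ici) (mem_Ici.2 hζ) hζ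
    have hφZ : (0:ℝ) < (φ (max Z' Z₀)) ^ ((4:ℝ)/3) := rpow_pos_of_pos (hpos _) _
    simp only at this
    nlinarith
  -- Z₁ with φ ζ ≥ ζ^{3/4}
  obtain ⟨Za, hZa0, hZa⟩ := hgrow 2 two_pos
  set Z₁ : ℝ := max (2*Za + 2) (max Za Z₀) with hZ₁_def
  have hZ₁Z₀ : Z₀ ≤ Z₁ := (le_max_right Za Z₀).trans (le_max_right _ _)
  have hZ₁1 : (1:ℝ) ≤ Z₁ := hZ₀1.trans hZ₁Z₀
  have hφ_low : ∀ ζ, Z₁ ≤ ζ → ζ ^ ((3:ℝ)/4) ≤ φ ζ := by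
    intro ζ hζ
    have hζZa : Za ≤ ζ := ((le_max_left Za Z₀).trans (le_max_right _ _)).trans hζ
    have hζ2 : 2*Za + 2 ≤ ζ := (le_max_left _ _).trans hζ
    have h2 : ζ ≤ (φ ζ) ^ ((4:ℝ)/3) := le_trans (by linarith) (hZa ζ hζZa)
    have hζpos : (0:ℝ) < ζ := lt_of_lt_of_le one_pos (hZ₁1.trans hζ)
    have h3 : ζ ^ ((3:ℝ)/4) ≤ ((φ ζ) ^ ((4:ℝ)/3)) ^ ((3:ℝ)/4) :=
      Real.rpow_le_rpow hζpos.le h2 (by norm_num)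
    rwa [← Real.rpow_mul (hpos ζ).le, show ((4:ℝ)/3 * (3/4)) = 1 by norm_num,
      Real.rpow_one] at h3
  have hφ32 : ∀ ζ, Z₁ ≤ ζ → (φ ζ) ^ (-((3:ℝ)/2)) ≤ ζ ^ (-((9:ℝ)/8)) := by
    intro ζ hζ
    have hζpos : (0:ℝ) < ζ := lt_of_lt_of_le one_pos (hZ₁1.trans hζ)
    have h := Real.rpow_le_rpow_of_nonpos (rpow_pos_of_pos hζpos _) (hφ_low ζ hζ)
      (by norm_num : -((3:ℝ)/2) ≤ 0)
    rwa [← Real.rpow_mul hζpos.le, show ((3:ℝ)/4 * -(3/2)) = -((9:ℝ)/8) by norm_num] at h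
  -- W and its derivative bound
  set W : ℝ → ℝ := fun ζ => (w ζ) ^ ((1:ℝ)/5) with hW_def
  set Wd : ℝ → ℝ := fun ζ => wd ζ * ((1:ℝ)/5) * (w ζ) ^ ((1:ℝ)/5 - 1) with hWd_def
  have hdW : ∀ ζ, Z₀ ≤ ζ → HasDerivAt W (Wd ζ) ζ := fun ζ hζ =>
    (hdw ζ).rpow_const (Or.inl (hwpos ζ hζ).ne')
  have hWd_bound : ∀ ζ, Z₁ ≤ ζ → |Wd ζ| ≤ (C/5) * ζ ^ (-((9:ℝ)/8)) := by
    intro ζ hζ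
    have hζ0 : Z₀ ≤ ζ := hZ₁Z₀.trans hζ
    have hwp : 0 < w ζ := hwpos ζ hζ0
    have hwd_b : |wd ζ| ≤ C * (w ζ) ^ ((4:ℝ)/5) * (φ ζ) ^ (-((3:ℝ)/2)) := by
      simp only [hwd_def]
      rw [abs_mul, abs_of_pos (rpow_pos_of_pos (hpos ζ) _)]
      exact mul_le_mul_of_nonneg_right (hkey ζ hζ0) (rpow_pos_of_pos (hpos ζ) _).le
    have hw1 : (w ζ) ^ ((4:ℝ)/5) * (w ζ) ^ ((1:ℝ)/5 - 1) = 1 := by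
      rw [← Real.rpow_add hwp]
      norm_num
    calc |Wd ζ| = |wd ζ| * ((1:ℝ)/5) * (w ζ) ^ ((1:ℝ)/5 - 1) := by
          simp only [hWd_def]
          rw [abs_mul, abs_mul, abs_of_pos (rpow_pos_of_pos hwp _)]
          norm_num
      _ ≤ (C * (w ζ) ^ ((4:ℝ)/5) * (φ ζ) ^ (-((3:ℝ)/2))) * ((1:ℝ)/5) * (w ζ) ^ ((1:ℝ)/5 - 1) := by
          apply mul_le_mul_of_nonneg_right (mul_le_mul_of_nonneg_right hwd_b (by norm_num))
            (rpow_pos_of_pos hwp _).le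
      _ = (C/5) * (φ ζ) ^ (-((3:ℝ)/2)) * ((w ζ) ^ ((4:ℝ)/5) * (w ζ) ^ ((1:ℝ)/5 - 1)) := by ring
      _ = (C/5) * (φ ζ) ^ (-((3:ℝ)/2)) := by rw [hw1, mul_one]
      _ ≤ (C/5) * ζ ^ (-((9:ℝ)/8)) := by
          apply mul_le_mul_of_nonneg_left (hφ32 ζ hζ) (by positivity)
  -- comparison function F
  set F : ℝ → ℝ := fun ζ => -(8*C/5) * ζ ^ (-((1:ℝ)/8)) with hF_def
  set Fd : ℝ → ℝ := fun ζ => (C/5) * ζ ^ (-((9:ℝ)/8)) with hFd_def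
  have hdF : ∀ ζ, Z₁ ≤ ζ → HasDerivAt F (Fd ζ) ζ := by
    intro ζ hζ
    have hζpos : (0:ℝ) < ζ := lt_of_lt_of_le one_pos (hZ₁1.trans hζ)
    have h := (Real.hasDerivAt_rpow_const (x := ζ) (p := -((1:ℝ)/8))
      (Or.inl hζpos.ne')).const_mul (-(8*C/5))
    refine h.congr_deriv ?_
    rw [show (-((1:ℝ)/8) - 1) = -((9:ℝ)/8) by norm_num]
    simp only [hFd_def]
    ring
  have hmonoWF : MonotoneOn (fun ζ => W ζ + F ζ) (Set.Ici Z₁) := by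
    apply aux_mono (g := fun ζ => Wd ζ + Fd ζ)
    · exact fun x hx => (hdW x (hZ₁Z₀.trans hx)).add (hdF x hx)
    · intro x hx
      have h1 := hWd_bound x hx
      have h2 : -((C/5) * x ^ (-((9:ℝ)/8))) ≤ Wd x := by
        have := neg_abs_le (Wd x); linarith
      simp only [hFd_def]
      linarith
  have hantiWF : AntitoneOn (fun ζ => W ζ - F ζ) (Set.Ici Z₁) := by
    apply aux_anti (g := fun ζ => Wd ζ - Fd ζ)
    · exact fun x hx => (hdW x (hZ₁Z₀.trans hx)).sub (hdF x hx)
    · intro x hx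
      have h1 := hWd_bound x hx
      have h2 : Wd x ≤ (C/5) * x ^ (-((9:ℝ)/8)) := (le_abs_self _).trans h1
      simp only [hFd_def]
      linarith
  have hWnonneg : ∀ ζ, Z₀ ≤ ζ → 0 ≤ W ζ := fun ζ hζ =>
    (rpow_pos_of_pos (hwpos ζ hζ) _).le
  have hFneg : ∀ ζ, Z₁ ≤ ζ → F ζ ≤ 0 := by
    intro ζ hζ
    have hζpos : (0:ℝ) < ζ := lt_of_lt_of_le one_pos (hZ₁1.trans hζ)
    simp only [hF_def]
    have : (0:ℝ) < ζ ^ (-((1:ℝ)/8)) := rpow_pos_of_pos hζpos _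
    nlinarith
  -- convergence of W
  set WF : ℝ → ℝ := fun ζ => W (max ζ Z₁) - F (max ζ Z₁) with hWF_def
  have hWFanti : Antitone WF := by
    intro a b hab
    exact hantiWF (mem_Ici.2 (le_max_right _ _)) (mem_Ici.2 (le_max_right _ _))
      (max_le_max hab le_rfl)
  have hWFnonneg : ∀ ζ, 0 ≤ WF ζ := by
    intro ζ
    have h1 := hWnonneg (max ζ Z₁) (hZ₁Z₀.trans (le_max_right _ _))
    have h2 := hFneg (max ζ Z₁) (le_max_right _ _)
    simp only [hWF_def]
    linarith
  set L : ℝ := ⨅ ζ, WF ζ with hL_def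
  have htWF : Tendsto WF atTop (nhds L) :=
    tendsto_atTop_ciInf hWFanti ⟨0, by rintro _ ⟨ζ, rfl⟩; exact hWFnonneg ζ⟩
  have hL0 : 0 ≤ L := le_ciInf hWFnonneg
  have htWmF : Tendsto (fun ζ => W ζ - F ζ) atTop (nhds L) := by
    apply htWF.congr'
    filter_upwards [eventually_ge_atTop Z₁] with ζ hζ
    simp only [hWF_def, max_eq_left hζ]
  have htF : Tendsto F atTop (nhds 0) := by
    have h := (tendsto_rpow_neg_atTop (y := (1:ℝ)/8) (by norm_num)).const_mul (-(8*C/5))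
    rw [mul_zero] at h
    exact h
  have htW : Tendsto W atTop (nhds L) := by
    have := htWmF.add htF
    rw [add_zero] at this
    simpa using this
  have htw : Tendsto w atTop (nhds (L^5)) := by
    apply (htW.pow 5).congr'
    filter_upwards [eventually_ge_atTop Z₀] with ζ hζ
    have hwp := hwpos ζ hζ
    simp only [hW_def]
    rw [← Real.rpow_natCast ((w ζ) ^ ((1:ℝ)/5)) 5, ← Real.rpow_mul hwp.le]
    norm_num
  -- G = sqrt φ and its derivative
  set G : ℝ → ℝ := fun ζ => (φ ζ) ^ ((1:ℝ)/2) with hG_def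
  have hdG : ∀ ζ, HasDerivAt G (w ζ / 2) ζ := by
    intro ζ
    have h := (hd1 ζ).rpow_const (p := (1:ℝ)/2) (Or.inl (hpos ζ).ne')
    convert h using 1
    rw [show ((1:ℝ)/2 - 1) = -((1:ℝ)/2) by norm_num]
    simp only [hw_def]
    ring
  have hGpos : ∀ ζ, 0 < G ζ := fun ζ => rpow_pos_of_pos (hpos ζ) _
  -- L is positive
  have hLpos : 0 < L := by
    rcases lt_or_eq_of_le hL0 with h | h
    · exact h
    exfalso
    -- W + F is monotone with limit L + 0 = 0, so W ζ + F ζ ≤ 0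
    have htWpF : Tendsto (fun ζ => W ζ + F ζ) atTop (nhds 0) := by
      have := htW.add htF
      rw [add_zero, ← h] at this
      exact this
    have hWub : ∀ ζ, Z₁ ≤ ζ → W ζ ≤ (8*C/5) * ζ ^ (-((1:ℝ)/8)) := by
      intro ζ hζ
      have hle : W ζ + F ζ ≤ 0 := by
        apply ge_of_tendsto htWpF
        filter_upwards [eventually_ge_atTop ζ] with ξ hξ
        exact hmonoWF (mem_Ici.2 hζ) (mem_Ici.2 (hζ.trans hξ)) hξ
      simp only [hF_def] at hle
      linarith
    set c₁ : ℝ := (8*C/5)^5 with hc₁_def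
    have hc₁ : 0 < c₁ := by positivity
    have hw_ub : ∀ ζ, Z₁ ≤ ζ → w ζ ≤ c₁ * ζ ^ (-((5:ℝ)/8)) := by
      intro ζ hζ
      have hζpos : (0:ℝ) < ζ := lt_of_lt_of_le one_pos (hZ₁1.trans hζ)
      have h1 : w ζ = (W ζ)^5 := by
        simp only [hW_def]
        rw [← Real.rpow_natCast ((w ζ) ^ ((1:ℝ)/5)) 5,
          ← Real.rpow_mul (hwpos ζ (hZ₁Z₀.trans hζ)).le]
        norm_num
      have h2 : (W ζ)^5 ≤ ((8*C/5) * ζ ^ (-((1:ℝ)/8)))^5 :=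
        pow_le_pow_left₀ (hWnonneg ζ (hZ₁Z₀.trans hζ)) (hWub ζ hζ) 5
      rw [h1]
      refine h2.trans (le_of_eq ?_)
      rw [mul_pow, ← Real.rpow_natCast (ζ ^ (-((1:ℝ)/8))) 5, ← Real.rpow_mul hζpos.le]
      norm_num
      exact Or.inl hc₁_def.symm
    -- G ζ ≤ A + B ζ^{3/8}
    set B : ℝ := 4*c₁/3 with hB_def
    set A : ℝ := G Z₁ with hA_def
    have hApos : 0 < A := hGpos Z₁
    have hBpos : 0 < B := by positivity
    have hGub : ∀ ζ, Z₁ ≤ ζ → G ζ ≤ A + B * ζ ^ ((3:ℝ)/8) := by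
      intro ζ hζ
      have hanti := aux_anti (Z := Z₁) (f := fun t => G t - B * t ^ ((3:ℝ)/8))
        (g := fun t => w t / 2 - B * ((3:ℝ)/8 * t ^ ((3:ℝ)/8 - 1)))
        (fun t ht => (hdG t).sub ((Real.hasDerivAt_rpow_const (x := t) (p := (3:ℝ)/8)
          (Or.inl (lt_of_lt_of_le one_pos (hZ₁1.trans ht)).ne')).const_mul B))
        ?_ (self_mem_Ici) (mem_Ici.2 hζ) hζ
      · have hB38 : (0:ℝ) ≤ B * Z₁ ^ ((3:ℝ)/8) := by positivity
        simp only at hanti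
        linarith
      · intro t ht
        have htpos : (0:ℝ) < t := lt_of_lt_of_le one_pos (hZ₁1.trans ht)
        have h1 := hw_ub t ht
        have h2 : t ^ ((3:ℝ)/8 - 1) = t ^ (-((5:ℝ)/8)) := by norm_num
        show w t / 2 - B * ((3:ℝ)/8 * t ^ ((3:ℝ)/8 - 1)) ≤ 0
        rw [h2]
        have h3 : B * ((3:ℝ)/8 * t ^ (-((5:ℝ)/8))) = (c₁/2) * t ^ (-((5:ℝ)/8)) := by
          simp only [hB_def]; ring
        rw [h3]
        linarith
    -- bound u by a constant, contradiction
    set Z₂ : ℝ := max Z₁ ((A/B) ^ ((8:ℝ)/3)) with hZ₂_def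
    have hKbound : ∀ ζ, Z₂ ≤ ζ → u ζ ≤ (2*B) ^ ((2:ℝ)/3) * (2*B*c₁) := by
      intro ζ hζ
      have hζ1 : Z₁ ≤ ζ := (le_max_left _ _).trans hζ
      have hζpos : (0:ℝ) < ζ := lt_of_lt_of_le one_pos (hZ₁1.trans hζ1)
      have hAB : A ≤ B * ζ ^ ((3:ℝ)/8) := by
        have h1 : (A/B) ^ ((8:ℝ)/3) ≤ ζ := (le_max_right _ _).trans hζ
        have h2 : ((A/B) ^ ((8:ℝ)/3)) ^ ((3:ℝ)/8) ≤ ζ ^ ((3:ℝ)/8) :=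
          Real.rpow_le_rpow (by positivity) h1 (by norm_num)
        rw [← Real.rpow_mul (by positivity : (0:ℝ) ≤ A/B),
          show ((8:ℝ)/3 * (3/8)) = 1 by norm_num, Real.rpow_one] at h2
        have h3 := mul_le_mul_of_nonneg_right h2 hBpos.le
        rw [div_mul_cancel₀ _ hBpos.ne'] at h3
        linarith
      have hG2 : G ζ ≤ 2*B * ζ ^ ((3:ℝ)/8) := by
        have := hGub ζ hζ1
        have h2 : (0:ℝ) ≤ ζ ^ ((3:ℝ)/8) := (rpow_pos_of_pos hζpos _).le
        linarith
      -- φ^{1/3} = G^{2/3}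
      have hφ13 : (φ ζ) ^ ((1:ℝ)/3) = (G ζ) ^ ((2:ℝ)/3) := by
        simp only [hG_def]
        rw [← Real.rpow_mul (hpos ζ).le]
        norm_num
      have hφ13ub : (φ ζ) ^ ((1:ℝ)/3) ≤ (2*B) ^ ((2:ℝ)/3) * ζ ^ ((1:ℝ)/4) := by
        rw [hφ13]
        have h1 : (G ζ) ^ ((2:ℝ)/3) ≤ (2*B * ζ ^ ((3:ℝ)/8)) ^ ((2:ℝ)/3) :=
          Real.rpow_le_rpow (hGpos ζ).le hG2 (by norm_num)
        refine h1.trans (le_of_eq ?_)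
        rw [Real.mul_rpow (by positivity) (rpow_pos_of_pos hζpos _).le,
          ← Real.rpow_mul hζpos.le]
        norm_num
      -- φ' = w * G
      have hφ' : φ' ζ = w ζ * G ζ := by
        simp only [hw_def, hG_def]
        rw [mul_assoc, ← Real.rpow_add (hpos ζ)]
        norm_num
      have hφ'ub : φ' ζ ≤ 2*B*c₁ * ζ ^ (-((1:ℝ)/4)) := by
        rw [hφ']
        calc w ζ * G ζ ≤ (c₁ * ζ ^ (-((5:ℝ)/8))) * (2*B * ζ ^ ((3:ℝ)/8)) := by
              apply mul_le_mul (hw_ub ζ hζ1) hG2 (hGpos ζ).le (by positivity)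
          _ = 2*B*c₁ * (ζ ^ (-((5:ℝ)/8)) * ζ ^ ((3:ℝ)/8)) := by ring
          _ = 2*B*c₁ * ζ ^ (-((1:ℝ)/4)) := by
              rw [← Real.rpow_add hζpos]; norm_num
      rw [hu]
      calc (φ ζ) ^ ((1:ℝ)/3) * φ' ζ
          ≤ ((2*B) ^ ((2:ℝ)/3) * ζ ^ ((1:ℝ)/4)) * (2*B*c₁ * ζ ^ (-((1:ℝ)/4))) := by
            apply mul_le_mul hφ13ub hφ'ub (hφ'pos ζ (hZ₁Z₀.trans hζ1)).le (by positivity)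
        _ = (2*B) ^ ((2:ℝ)/3) * (2*B*c₁) * (ζ ^ ((1:ℝ)/4) * ζ ^ (-((1:ℝ)/4))) := by ring
        _ = (2*B) ^ ((2:ℝ)/3) * (2*B*c₁) := by
            rw [← Real.rpow_add hζpos]
            norm_num
    obtain ⟨N, hN⟩ := eventually_atTop.1
      (hutop.eventually_ge_atTop ((2*B) ^ ((2:ℝ)/3) * (2*B*c₁) + 1))
    have h1 := hN (max N Z₂) (le_max_left _ _)
    have h2 := hKbound (max N Z₂) (le_max_right _ _)
    linarith
  -- final step: G ζ / ζ → L^5/2 and conclude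
  have hl5 : (0:ℝ) < L^5 := pow_pos hLpos 5
  have htGz : Tendsto (fun ζ => G ζ / ζ) atTop (nhds (L^5/2)) := by
    rw [Metric.tendsto_atTop]
    intro ε hε
    have hε' : (0:ℝ) < ε/3 := by linarith
    obtain ⟨N₁, hN₁⟩ := Metric.tendsto_atTop.1 htw (ε/3) hε'
    set Z₃ : ℝ := max N₁ 1 with hZ₃_def
    have hZ₃1 : (1:ℝ) ≤ Z₃ := le_max_right _ _
    have hwb : ∀ t, Z₃ ≤ t → |w t - L^5| < ε/3 := by
      intro t ht
      have := hN₁ t ((le_max_left _ _).trans ht)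
      rwa [Real.dist_eq] at this
    have hmonoG := aux_mono (Z := Z₃) (f := fun t => G t - ((L^5 - ε/3)/2)*t)
      (g := fun t => w t/2 - (L^5 - ε/3)/2)
      (fun t ht => (hdG t).sub (by simpa using (hasDerivAt_id t).const_mul ((L^5 - ε/3)/2)))
      (fun t ht => by
        have := abs_lt.1 (hwb t ht)
        show (0:ℝ) ≤ w t/2 - (L^5 - ε/3)/2
        linarith)
    have hantiG := aux_anti (Z := Z₃) (f := fun t => G t - ((L^5 + ε/3)/2)*t)
      (g := fun t => w t/2 - (L^5 + ε/3)/2)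
      (fun t ht => (hdG t).sub (by simpa using (hasDerivAt_id t).const_mul ((L^5 + ε/3)/2)))
      (fun t ht => by
        have := abs_lt.1 (hwb t ht)
        show w t/2 - (L^5 + ε/3)/2 ≤ 0
        linarith)
    set A₃ : ℝ := |G Z₃ - (L^5/2)*Z₃| with hA₃_def
    have hA₃0 : 0 ≤ A₃ := abs_nonneg _
    refine ⟨max Z₃ (3*A₃/ε + 1), fun ζ hζ => ?_⟩
    have hζ3 : Z₃ ≤ ζ := (le_max_left _ _).trans hζ
    have hζA : 3*A₃/ε + 1 ≤ ζ := (le_max_right _ _).trans hζ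
    have hζpos : (0:ℝ) < ζ := lt_of_lt_of_le one_pos (hZ₃1.trans hζ3)
    have h_low := hmonoG (self_mem_Ici) (mem_Ici.2 hζ3) hζ3
    have h_high := hantiG (self_mem_Ici) (mem_Ici.2 hζ3) hζ3
    simp only at h_low h_high
    have habs : |G ζ - (L^5/2)*ζ| ≤ (ε/6)*ζ + A₃ := by
      have h1 : |G ζ - G Z₃ - (L^5/2)*(ζ - Z₃)| ≤ (ε/6)*(ζ - Z₃) :=
        abs_le.2 ⟨by linarith, by linarith⟩
      have h2 : G ζ - (L^5/2)*ζ
          = (G ζ - G Z₃ - (L^5/2)*(ζ - Z₃)) + (G Z₃ - (L^5/2)*Z₃) := by ring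
      calc |G ζ - (L^5/2)*ζ|
          ≤ |G ζ - G Z₃ - (L^5/2)*(ζ - Z₃)| + |G Z₃ - (L^5/2)*Z₃| := by
            rw [h2]; exact abs_add_le _ _
        _ ≤ (ε/6)*(ζ - Z₃) + A₃ := by rw [hA₃_def]; linarith
        _ ≤ (ε/6)*ζ + A₃ := by
            have h3 : (0:ℝ) ≤ (ε/6)*Z₃ :=
              mul_nonneg (by linarith) (by linarith)
            linarith
    have hA₃ζ : A₃ < ζ * ε / 3 := by
      rw [div_add' _ _ _ (ne_of_gt hε)] at hζA
      have h4 := (div_le_iff₀ hε).1 hζA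
      linarith
    rw [Real.dist_eq]
    have heq : G ζ/ζ - L^5/2 = (G ζ - (L^5/2)*ζ)/ζ := by field_simp
    rw [heq, abs_div, abs_of_pos hζpos, div_lt_iff₀ hζpos]
    nlinarith [mul_pos hε hζpos]
  refine ⟨(L^5/2)*(L^5/2), mul_pos (half_pos hl5) (half_pos hl5), ?_⟩
  apply (htGz.mul htGz).congr'
  filter_upwards [eventually_ge_atTop (1:ℝ)] with ζ hζ
  have hζpos : (0:ℝ) < ζ := lt_of_lt_of_le one_pos hζ
  have hGG : G ζ * G ζ = φ ζ := by
    simp only [hG_def]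
    rw [← Real.rpow_add (hpos ζ)]
    norm_num
  show G ζ/ζ * (G ζ/ζ) = φ ζ / ζ^2
  rw [div_mul_div_comm, hGG, sq]
end
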